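/- arXiv:1501.07361 — 6 statements merged into one kernel-verified Lean document; each statement's English description precedes it below -/
import Mathlib

section
/- Existence of optimal solutions for sampled-data optimal control problems (Theorem 2, instance on ℝ⁺ with controlling times ℕT): Assume Ω ⊆ ℝ^m is nonempty and compact, g : ℝ^n × ℝ^n → ℝ^j is continuous, and S ⊆ ℝ^j is nonempty, closed and convex. Let M be the set of admissible triples (t_f, u, q), i.e. t_f ≥ 0, u : ℕ → Ω, q a trajectory on [0, t_f] associated with u, and g(q(0), q(t_f)) ∈ S. Assume: (a) M is nonempty; (b) there exists M₀ ≥ 0 such that sup_{t∈[0,t_f]} ‖q(t)‖ + t_f ≤ M₀ for every (t_f, u, q) ∈ M; (c) for every (t, x) ∈ ℝ × ℝ^n, the set W(t,x) = {(f(t,x,v), f⁰(t,x,v)) : v ∈ Ω} ⊆ ℝ^{n+1} is convex. Then there exists (t_f*, u*, q*) ∈ M whose cost ∫₀^{t_f*} f⁰(τ, q*(τ), u*(⌊τ/T⌋)) dτ is less than or equal to the cost of every element of M. -/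
open MeasureTheory Set Metric

noncomputable section

set_option maxHeartbeats 1000000
set_option synthInstance.maxHeartbeats 400000

/-- `ℝ^n` with its Euclidean inner product. -/
abbrev Vec (n : ℕ) : Type := EuclideanSpace ℝ (Fin n)

/-- The piecewise-constant action of a sampled-data control `u : ℕ → ℝ^m`
with sampling period `T`. -/
def sampledCtrl {m : ℕ} (T : ℝ) (u : ℕ → Vec m) (t : ℝ) : Vec m := u ⌊t / T⌋₊

/-- `q` is a trajectory on `[0, tf]` associated with the sampled-data control `u`. -/
def IsTrajectory {n m : ℕ} (T : ℝ) (f : ℝ → Vec n → Vec m → Vec n)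
    (tf : ℝ) (u : ℕ → Vec m) (q : ℝ → Vec n) : Prop :=
  ContinuousOn q (Icc 0 tf) ∧
    ∀ t ∈ Icc (0:ℝ) tf, q t = q 0 + ∫ τ in (0:ℝ)..t, f τ (q τ) (sampledCtrl T u τ)

/-- Cost of the pair `(u, q)` on `[0, tf]`. -/
def costOf {n m : ℕ} (T : ℝ) (f0 : ℝ → Vec n → Vec m → ℝ)
    (tf : ℝ) (u : ℕ → Vec m) (q : ℝ → Vec n) : ℝ :=
  ∫ τ in (0:ℝ)..tf, f0 τ (q τ) (sampledCtrl T u τ)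

/-- `(tf, u, q)` is an admissible triple. -/
def AdmissibleT {n m j : ℕ} (T : ℝ) (f : ℝ → Vec n → Vec m → Vec n)
    (g : Vec n × Vec n → Vec j) (Ω : Set (Vec m)) (S : Set (Vec j))
    (tf : ℝ) (u : ℕ → Vec m) (q : ℝ → Vec n) : Prop :=
  0 ≤ tf ∧ IsTrajectory T f tf u q ∧ (∀ k : ℕ, u k ∈ Ω) ∧ g (q 0, q tf) ∈ S

/-! ### Auxiliary material for the proof -/

lemma meas_sampledCtrl {m : ℕ} (T : ℝ) (u : ℕ → Vec m) : Measurable (sampledCtrl T u) :=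
  (measurable_from_top (f := u)).comp (Nat.measurable_floor.comp (measurable_id.div_const T))

/-- Clamp a function to its values on `[0, tf]`. -/
def clampTo {n : ℕ} (tf : ℝ) (q : ℝ → Vec n) : ℝ → Vec n := fun t => q (min (max t 0) tf)

lemma clampTo_eqOn {n : ℕ} (tf : ℝ) (q : ℝ → Vec n) : EqOn (clampTo tf q) q (Icc 0 tf) := by
  intro t ht
  simp [clampTo, max_eq_left ht.1, min_eq_left ht.2]

lemma clampTo_continuous {n : ℕ} {tf : ℝ} (htf : 0 ≤ tf) {q : ℝ → Vec n}
    (hq : ContinuousOn q (Icc 0 tf)) : Continuous (clampTo tf q) := by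
  apply hq.comp_continuous (by fun_prop)
  intro t
  exact ⟨le_min (le_max_right _ _) htf, min_le_right _ _⟩

lemma clampTo_mem {n : ℕ} {tf : ℝ} (htf : 0 ≤ tf) (q : ℝ → Vec n) (t : ℝ) :
    min (max t 0) tf ∈ Icc 0 tf :=
  ⟨le_min (le_max_right _ _) htf, min_le_right _ _⟩

lemma meas_integrand {n m : ℕ} {E : Type*} [NormedAddCommGroup E]
    [MeasurableSpace E] [BorelSpace E] (T : ℝ) (f : ℝ → Vec n → Vec m → E)
    (hf : Continuous fun x : ℝ × Vec n × Vec m => f x.1 x.2.1 x.2.2)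
    (u : ℕ → Vec m) {Q : ℝ → Vec n} (hQ : Continuous Q) :
    Measurable (fun τ => f τ (Q τ) (sampledCtrl T u τ)) :=
  hf.measurable.comp (measurable_id.prodMk (hQ.measurable.prodMk (meas_sampledCtrl T u)))

lemma integrable_of_bound {E : Type*} [NormedAddCommGroup E] {F : ℝ → E} {a b C : ℝ}
    (hm : AEStronglyMeasurable F (volume.restrict (Set.uIoc a b)))
    (hC : ∀ τ ∈ Set.uIoc a b, ‖F τ‖ ≤ C) :
    IntervalIntegrable F volume a b := by
  rw [intervalIntegrable_iff]
  refine Integrable.mono' (g := fun _ => C)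
    (integrableOn_const measure_Ioc_lt_top.ne) hm ?_
  exact (ae_restrict_iff' measurableSet_uIoc).2 (Filter.Eventually.of_forall hC)

lemma uIoc_subset_Icc' {a b M0 : ℝ} (ha : a ∈ Icc 0 M0) (hb : b ∈ Icc 0 M0) :
    Set.uIoc a b ⊆ Icc 0 M0 := fun τ hτ =>
  ⟨le_of_lt (lt_of_le_of_lt (le_min ha.1 hb.1) hτ.1), le_trans hτ.2 (max_le ha.2 hb.2)⟩

/-- Integrability, the integral form of increments, and the Lipschitz property
for the clamped trajectory of an admissible triple. -/
lemma key_lemma {n m : ℕ} (T : ℝ)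
    (f : ℝ → Vec n → Vec m → Vec n)
    (hf_cont : Continuous fun x : ℝ × Vec n × Vec m => f x.1 x.2.1 x.2.2)
    (M0 : ℝ) (hM0 : 0 ≤ M0) (Cf : ℝ) (hCf : 0 ≤ Cf)
    (tf : ℝ) (u : ℕ → Vec m) (q : ℝ → Vec n)
    (htf : 0 ≤ tf) (htfM : tf ≤ M0)
    (hqc : ContinuousOn q (Icc 0 tf))
    (hqe : ∀ t ∈ Icc (0:ℝ) tf, q t = q 0 + ∫ τ in (0:ℝ)..t, f τ (q τ) (sampledCtrl T u τ))
    (hfb : ∀ τ ∈ Icc (0:ℝ) M0, ‖f τ (clampTo tf q τ) (sampledCtrl T u τ)‖ ≤ Cf) :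
    (∀ a b, a ∈ Icc 0 M0 → b ∈ Icc 0 M0 → IntervalIntegrable
        (fun τ => f τ (clampTo tf q τ) (sampledCtrl T u τ)) volume a b) ∧
    (∀ a b, a ∈ Icc 0 tf → b ∈ Icc 0 tf →
        q b - q a = ∫ τ in a..b, f τ (clampTo tf q τ) (sampledCtrl T u τ)) ∧
    (LipschitzWith (Real.toNNReal Cf) (clampTo tf q)) := by
  have hQc : Continuous (clampTo tf q) := clampTo_continuous htf hqc
  have hIccsub : Icc (0:ℝ) tf ⊆ Icc 0 M0 := Icc_subset_Icc (le_refl 0) htfM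
  have hGint : ∀ a b, a ∈ Icc 0 M0 → b ∈ Icc 0 M0 → IntervalIntegrable
      (fun τ => f τ (clampTo tf q τ) (sampledCtrl T u τ)) volume a b := by
    intro a b ha hb
    refine integrable_of_bound
      ((meas_integrand T f hf_cont u hQc).aestronglyMeasurable) (C := Cf) ?_
    intro τ hτ
    exact hfb _ (uIoc_subset_Icc' ha hb hτ)
  have hint_eq : ∀ x ∈ Icc (0:ℝ) tf,
      (∫ τ in (0:ℝ)..x, f τ (q τ) (sampledCtrl T u τ)) =
      ∫ τ in (0:ℝ)..x, f τ (clampTo tf q τ) (sampledCtrl T u τ) := by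
    intro x hx
    refine intervalIntegral.integral_congr fun τ hτ => ?_
    rw [uIcc_of_le hx.1] at hτ
    rw [clampTo_eqOn tf q (Icc_subset_Icc (le_refl _) hx.2 hτ)]
  have hdiff : ∀ a b, a ∈ Icc 0 tf → b ∈ Icc 0 tf →
      q b - q a = ∫ τ in a..b, f τ (clampTo tf q τ) (sampledCtrl T u τ) := by
    intro a b ha hb
    rw [hqe b hb, hqe a ha]
    have h1 : q 0 + (∫ τ in (0:ℝ)..b, f τ (q τ) (sampledCtrl T u τ)) -
        (q 0 + ∫ τ in (0:ℝ)..a, f τ (q τ) (sampledCtrl T u τ)) =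
        (∫ τ in (0:ℝ)..b, f τ (q τ) (sampledCtrl T u τ)) -
        (∫ τ in (0:ℝ)..a, f τ (q τ) (sampledCtrl T u τ)) := by abel
    rw [h1, hint_eq b hb, hint_eq a ha]
    exact intervalIntegral.integral_interval_sub_left
      (hGint 0 b (left_mem_Icc.2 hM0) (hIccsub hb))
      (hGint 0 a (left_mem_Icc.2 hM0) (hIccsub ha))
  have hLip : LipschitzWith (Real.toNNReal Cf) (clampTo tf q) := by
    rw [lipschitzWith_iff_dist_le_mul]
    intro s t
    set ps := min (max s 0) tf with hps
    set pt := min (max t 0) tf with hpt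
    have hpsI : ps ∈ Icc 0 tf := clampTo_mem htf q s
    have hptI : pt ∈ Icc 0 tf := clampTo_mem htf q t
    have h1 : clampTo tf q s = q ps := rfl
    have h2 : clampTo tf q t = q pt := rfl
    have hproj : LipschitzWith 1 (fun s : ℝ => min (max s 0) tf) := by
      have h1 : LipschitzWith 1 (fun y : ℝ => min y tf) :=
        LipschitzWith.min_const (LipschitzWith.id) tf
      have h2 : LipschitzWith 1 (fun s : ℝ => max s 0) :=
        LipschitzWith.max_const (LipschitzWith.id) 0
      have h3 := h1.comp h2
      rw [mul_one] at h3
      exact h3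
    rw [dist_eq_norm, h1, h2]
    rw [hdiff pt ps hptI hpsI]
    calc ‖∫ τ in pt..ps, f τ (clampTo tf q τ) (sampledCtrl T u τ)‖
        ≤ Cf * |ps - pt| := by
          apply intervalIntegral.norm_integral_le_of_norm_le_const
          intro x hx
          exact hfb _ (uIoc_subset_Icc' (hIccsub hptI) (hIccsub hpsI) hx)
      _ ≤ Cf * dist s t := by
          apply mul_le_mul_of_nonneg_left _ hCf
          rw [← Real.dist_eq]
          simpa [hps, hpt, Real.dist_eq] using hproj.dist_le_mul s t
      _ = Real.toNNReal Cf * dist s t := by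
          rw [Real.coe_toNNReal _ hCf]
  exact ⟨hGint, hdiff, hLip⟩

/-- The cost only depends on the clamped trajectory. -/
lemma cost_clamp {n m : ℕ} (T : ℝ) (f0 : ℝ → Vec n → Vec m → ℝ)
    {tf : ℝ} (htf : 0 ≤ tf) (u : ℕ → Vec m) (q : ℝ → Vec n) :
    costOf T f0 tf u q = ∫ τ in (0:ℝ)..tf, f0 τ (clampTo tf q τ) (sampledCtrl T u τ) := by
  unfold costOf
  refine intervalIntegral.integral_congr fun τ hτ => ?_
  rw [uIcc_of_le htf] at hτ
  rw [clampTo_eqOn tf q hτ]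

/-- Convergence of interval integrals with varying endpoints under uniform bounds and
pointwise convergence of the integrands. -/
lemma integral_conv {E : Type*} [NormedAddCommGroup E] [NormedSpace ℝ E]
    (F : ℕ → ℝ → E) (Fs : ℝ → E) (C M0 : ℝ) (hC : 0 ≤ C)
    (a : ℕ → ℝ) (ha : ∀ k, a k ∈ Icc (0:ℝ) M0) (t : ℝ) (ht : t ∈ Icc (0:ℝ) M0)
    (hat : Filter.Tendsto a Filter.atTop (nhds t))
    (hFmeas : ∀ k, StronglyMeasurable (F k))
    (hFb : ∀ k, ∀ τ ∈ Icc (0:ℝ) M0, ‖F k τ‖ ≤ C)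
    (hpt : ∀ τ ∈ Icc (0:ℝ) M0,
      Filter.Tendsto (fun k => F k τ) Filter.atTop (nhds (Fs τ)))
    (hFsint : IntervalIntegrable Fs volume 0 t) :
    Filter.Tendsto (fun k => ∫ τ in (0:ℝ)..(a k), F k τ) Filter.atTop
      (nhds (∫ τ in (0:ℝ)..t, Fs τ)) := by
  have hM0 : (0:ℝ) ≤ M0 := ht.1.trans ht.2
  have h0M : (0:ℝ) ∈ Icc (0:ℝ) M0 := ⟨le_refl 0, hM0⟩
  have hFint : ∀ k (x : ℝ), x ∈ Icc (0:ℝ) M0 → IntervalIntegrable (F k) volume 0 x := by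
    intro k x hx
    exact integrable_of_bound ((hFmeas k).aestronglyMeasurable)
      (fun τ hτ => hFb k τ (uIoc_subset_Icc' h0M hx hτ))
  have hsplit : ∀ k, (∫ τ in (0:ℝ)..(a k), F k τ) =
      (∫ τ in (0:ℝ)..t, F k τ) - ∫ τ in (a k)..t, F k τ := by
    intro k
    rw [← intervalIntegral.integral_interval_sub_left (hFint k t ht) (hFint k (a k) (ha k))]
    abel
  have T1 : Filter.Tendsto (fun k => ∫ τ in (0:ℝ)..t, F k τ) Filter.atTop
      (nhds (∫ τ in (0:ℝ)..t, Fs τ)) := by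
    refine intervalIntegral.tendsto_integral_filter_of_dominated_convergence
      (fun _ => C) (Filter.Eventually.of_forall fun k => (hFmeas k).aestronglyMeasurable)
      (Filter.Eventually.of_forall fun k => ?_) intervalIntegrable_const
      (Filter.Eventually.of_forall fun τ hτ => hpt τ (uIoc_subset_Icc' h0M ht hτ))
    exact Filter.Eventually.of_forall fun τ hτ => hFb k τ (uIoc_subset_Icc' h0M ht hτ)
  have T2 : Filter.Tendsto (fun k => ∫ τ in (a k)..t, F k τ) Filter.atTop (nhds 0) := by
    rw [tendsto_zero_iff_norm_tendsto_zero]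
    have hb : Filter.Tendsto (fun k => C * |t - a k|) Filter.atTop (nhds 0) := by
      have h1 : Filter.Tendsto (fun k => t - a k) Filter.atTop (nhds 0) := by
        simpa using (tendsto_const_nhds (x := t) (f := Filter.atTop (α := ℕ))).sub hat
      have := (h1.abs).const_mul C
      simpa using this
    refine squeeze_zero (fun k => norm_nonneg _) (fun k => ?_) hb
    have := intervalIntegral.norm_integral_le_of_norm_le_const (C := C)
      (f := F k) (a := a k) (b := t)
      (fun x hx => hFb k x (uIoc_subset_Icc' (ha k) ht hx))
    exact this
  have := T1.sub T2
  rw [sub_zero] at this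
  refine Filter.Tendsto.congr (fun k => (hsplit k).symm) this

/-- Existence of optimal solutions for sampled-data optimal control problems
(Filippov-type existence theorem, instance on `ℝ⁺` with controlling times `ℕT`). -/
theorem existence_optimal_sampled_data
    {n m j : ℕ} (hn : 0 < n) (hm : 0 < m) (hj : 0 < j)
    (T : ℝ) (hT : 0 < T)
    (f : ℝ → Vec n → Vec m → Vec n) (f0 : ℝ → Vec n → Vec m → ℝ)
    (hf_cont : Continuous fun x : ℝ × Vec n × Vec m => f x.1 x.2.1 x.2.2)
    (hf0_cont : Continuous fun x : ℝ × Vec n × Vec m => f0 x.1 x.2.1 x.2.2)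
    (hf_C1 : ∀ t : ℝ, ContDiff ℝ 1 fun x : Vec n × Vec m => f t x.1 x.2)
    (hf0_C1 : ∀ t : ℝ, ContDiff ℝ 1 fun x : Vec n × Vec m => f0 t x.1 x.2)
    (g : Vec n × Vec n → Vec j) (hg : Continuous g)
    (Ω : Set (Vec m)) (hΩne : Ω.Nonempty) (hΩcp : IsCompact Ω)
    (S : Set (Vec j)) (hSne : S.Nonempty) (hScl : IsClosed S) (hScv : Convex ℝ S)
    -- (a) the set of admissible triples is nonempty
    (hMne : ∃ (tf : ℝ) (u : ℕ → Vec m) (q : ℝ → Vec n), AdmissibleT T f g Ω S tf u q)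
    -- (b) uniform bound on trajectories and final times
    (hbound : ∃ M0 : ℝ, 0 ≤ M0 ∧ ∀ (tf : ℝ) (u : ℕ → Vec m) (q : ℝ → Vec n),
      AdmissibleT T f g Ω S tf u q → ∀ t ∈ Icc (0:ℝ) tf, ‖q t‖ + tf ≤ M0)
    -- (c) convexity of the set of extended velocities
    (hconv : ∀ (t : ℝ) (x : Vec n),
      Convex ℝ {y : Vec n × ℝ | ∃ v ∈ Ω, y = (f t x v, f0 t x v)}) :
    ∃ (tfs : ℝ) (us : ℕ → Vec m) (qs : ℝ → Vec n),
      AdmissibleT T f g Ω S tfs us qs ∧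
      ∀ (tf : ℝ) (u : ℕ → Vec m) (q : ℝ → Vec n), AdmissibleT T f g Ω S tf u q →
        costOf T f0 tfs us qs ≤ costOf T f0 tf u q := by
  classical
  obtain ⟨M0, hM0, hB⟩ := hbound
  -- basic bounds for admissible triples
  have htf_le : ∀ {tf u q}, AdmissibleT T f g Ω S tf u q → tf ≤ M0 := by
    intro tf u q h
    have h0 := hB tf u q h 0 ⟨le_refl 0, h.1⟩
    nlinarith [norm_nonneg (q 0)]
  have hq_le : ∀ {tf u q}, AdmissibleT T f g Ω S tf u q → ∀ t ∈ Icc (0:ℝ) tf,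
      ‖q t‖ ≤ M0 := by
    intro tf u q h t ht
    have := hB tf u q h t ht
    linarith [h.1]
  -- uniform bounds for `f` and `f0` on the relevant compact set
  obtain ⟨Cf0, hCf0⟩ := ((isCompact_Icc (a := (0:ℝ)) (b := M0)).prod
    ((isCompact_closedBall (0:Vec n) M0).prod hΩcp)).exists_bound_of_continuousOn
    hf_cont.continuousOn
  obtain ⟨Cg0, hCg0⟩ := ((isCompact_Icc (a := (0:ℝ)) (b := M0)).prod
    ((isCompact_closedBall (0:Vec n) M0).prod hΩcp)).exists_bound_of_continuousOn
    hf0_cont.continuousOn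
  have hCf : (0:ℝ) ≤ max Cf0 0 := le_max_right _ _
  have hCg : (0:ℝ) ≤ max Cg0 0 := le_max_right _ _
  have hfb : ∀ τ ∈ Icc (0:ℝ) M0, ∀ x : Vec n, ‖x‖ ≤ M0 → ∀ v ∈ Ω,
      ‖f τ x v‖ ≤ max Cf0 0 := by
    intro τ hτ x hx v hv
    exact le_trans (hCf0 (τ, x, v) ⟨hτ, mem_closedBall_zero_iff.2 hx, hv⟩) (le_max_left _ _)
  have hgb : ∀ τ ∈ Icc (0:ℝ) M0, ∀ x : Vec n, ‖x‖ ≤ M0 → ∀ v ∈ Ω,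
      ‖f0 τ x v‖ ≤ max Cg0 0 := by
    intro τ hτ x hx v hv
    exact le_trans (hCg0 (τ, x, v) ⟨hτ, mem_closedBall_zero_iff.2 hx, hv⟩) (le_max_left _ _)
  -- bound for the clamped trajectory of an admissible triple
  have hQle : ∀ {tf u q}, AdmissibleT T f g Ω S tf u q → ∀ τ, ‖clampTo tf q τ‖ ≤ M0 :=
    fun {tf u q} h τ => hq_le h _ (clampTo_mem h.1 q τ)
  have hfb' : ∀ {tf u q}, AdmissibleT T f g Ω S tf u q →
      ∀ τ ∈ Icc (0:ℝ) M0, ‖f τ (clampTo tf q τ) (sampledCtrl T u τ)‖ ≤ max Cf0 0 :=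
    fun {tf u q} h τ hτ => hfb τ hτ _ (hQle h τ) _ (h.2.2.1 _)
  have hgb' : ∀ {tf u q}, AdmissibleT T f g Ω S tf u q →
      ∀ τ ∈ Icc (0:ℝ) M0, ‖f0 τ (clampTo tf q τ) (sampledCtrl T u τ)‖ ≤ max Cg0 0 :=
    fun {tf u q} h τ hτ => hgb τ hτ _ (hQle h τ) _ (h.2.2.1 _)
  have hkey := fun {tf u q} (h : AdmissibleT T f g Ω S tf u q) =>
    key_lemma T f hf_cont M0 hM0 (max Cf0 0) hCf tf u q h.1 (htf_le h)
      h.2.1.1 h.2.1.2 (hfb' h)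
  -- `0 ∈ Icc 0 M0`
  have h0M : (0:ℝ) ∈ Icc (0:ℝ) M0 := ⟨le_refl 0, hM0⟩
  have htfI : ∀ {tf u q}, AdmissibleT T f g Ω S tf u q → tf ∈ Icc (0:ℝ) M0 :=
    fun h => ⟨h.1, htf_le h⟩
  -- integrability of the clamped cost integrand
  have hHint : ∀ {tf u q}, AdmissibleT T f g Ω S tf u q → ∀ a b, a ∈ Icc (0:ℝ) M0 →
      b ∈ Icc (0:ℝ) M0 → IntervalIntegrable
      (fun τ => f0 τ (clampTo tf q τ) (sampledCtrl T u τ)) volume a b := by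
    intro tf u q h a b ha hb
    refine integrable_of_bound ((meas_integrand T f0 hf0_cont u
      (clampTo_continuous h.1 h.2.1.1)).aestronglyMeasurable) (C := max Cg0 0) ?_
    intro τ hτ
    exact hgb' h _ (uIoc_subset_Icc' ha hb hτ)
  -- cost bound
  have hcost_abs : ∀ {tf u q}, AdmissibleT T f g Ω S tf u q →
      |costOf T f0 tf u q| ≤ max Cg0 0 * M0 := by
    intro tf u q h
    rw [cost_clamp T f0 h.1, ← Real.norm_eq_abs]
    calc ‖∫ τ in (0:ℝ)..tf, f0 τ (clampTo tf q τ) (sampledCtrl T u τ)‖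
        ≤ max Cg0 0 * |tf - 0| := intervalIntegral.norm_integral_le_of_norm_le_const
          (fun x hx => hgb' h _ (uIoc_subset_Icc' h0M (htfI h) hx))
      _ ≤ max Cg0 0 * M0 := by
          rw [sub_zero, abs_of_nonneg h.1]
          exact mul_le_mul_of_nonneg_left (htf_le h) hCg
  -- the set of achievable costs and its infimum
  set CS : Set ℝ := {x | ∃ (tf : ℝ) (u : ℕ → Vec m) (q : ℝ → Vec n), AdmissibleT T f g Ω S tf u q ∧ costOf T f0 tf u q = x}
    with hCSdef
  have hCSne : CS.Nonempty := by
    obtain ⟨tf, u, q, h⟩ := hMne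
    exact ⟨costOf T f0 tf u q, tf, u, q, h, rfl⟩
  have hCSbdd : BddBelow CS := by
    refine ⟨-(max Cg0 0 * M0), fun x hx => ?_⟩
    obtain ⟨tf, u, q, h, rfl⟩ := hx
    exact neg_le_of_abs_le (hcost_abs h)
  -- minimizing sequence
  have hseq : ∀ k : ℕ, ∃ (tf : ℝ) (u : ℕ → Vec m) (q : ℝ → Vec n),
      AdmissibleT T f g Ω S tf u q ∧
      costOf T f0 tf u q < sInf CS + 1 / (k + 1) := by
    intro k
    have hlt : sInf CS < sInf CS + 1 / (k + 1) :=
      lt_add_of_pos_right _ (by positivity)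
    obtain ⟨x, hxCS, hx⟩ := exists_lt_of_csInf_lt hCSne hlt
    obtain ⟨tf, u, q, h, rfl⟩ := hxCS
    exact ⟨tf, u, q, h, hx⟩
  choose tf u q hadm hcs using hseq
  have hclt : ∀ k, sInf CS ≤ costOf T f0 (tf k) (u k) (q k) :=
    fun k => csInf_le hCSbdd ⟨tf k, u k, q k, hadm k, rfl⟩
  -- convergence of the costs of the minimizing sequence to the infimum
  have hcost_tendsto : Filter.Tendsto (fun k => costOf T f0 (tf k) (u k) (q k))
      Filter.atTop (nhds (sInf CS)) := by
    have h1 : Filter.Tendsto (fun k : ℕ => sInf CS + 1 / (k + 1))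
        Filter.atTop (nhds (sInf CS)) := by
      have := tendsto_one_div_add_atTop_nhds_zero_nat (𝕜 := ℝ)
      have h2 := Filter.Tendsto.add (tendsto_const_nhds (x := sInf CS)
        (f := Filter.atTop (α := ℕ))) this
      simpa using h2
    exact tendsto_of_tendsto_of_tendsto_of_le_of_le
      (tendsto_const_nhds) h1 hclt (fun k => (hcs k).le)
  -- the Arzelà–Ascoli setup
  have hQadm := fun k => (hadm k)
  set X := BoundedContinuousFunction (Icc (0:ℝ) M0) (Vec n) with hXdef
  set Qb : ℕ → X := fun k => BoundedContinuousFunction.mkOfCompact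
    ⟨fun x => clampTo (tf k) (q k) x,
      ((clampTo_continuous (hadm k).1 (hadm k).2.1.1).comp continuous_subtype_val)⟩
    with hQbdef
  have hQb_apply : ∀ k (x : Icc (0:ℝ) M0), Qb k x = clampTo (tf k) (q k) x :=
    fun k x => rfl
  have hQbLip : ∀ k, LipschitzWith (Real.toNNReal (max Cf0 0))
      (fun x : Icc (0:ℝ) M0 => Qb k x) := by
    intro k
    have := ((hkey (hadm k)).2.2).comp (LipschitzWith.subtype_val (fun x => x ∈ Icc (0:ℝ) M0))
    rw [mul_one] at this
    exact this
  have hQbA : ∀ k (x : Icc (0:ℝ) M0), Qb k x ∈ closedBall (0:Vec n) M0 :=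
    fun k x => mem_closedBall_zero_iff.2 (hQle (hadm k) x)
  set A : Set X := {h | LipschitzWith (Real.toNNReal (max Cf0 0)) (fun x => h x) ∧
    ∀ x, h x ∈ closedBall (0:Vec n) M0} with hAdef
  have hAcl : IsClosed A := by
    have : A = (⋂ p : (Icc (0:ℝ) M0) × (Icc (0:ℝ) M0),
        {h : X | dist (h p.1) (h p.2) ≤ Real.toNNReal (max Cf0 0) * dist p.1 p.2}) ∩
        (⋂ x : Icc (0:ℝ) M0, {h : X | h x ∈ closedBall (0:Vec n) M0}) := by
      ext h
      simp only [hAdef, mem_setOf_eq, mem_inter_iff, mem_iInter,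
        lipschitzWith_iff_dist_le_mul, Prod.forall]
    rw [this]
    refine IsClosed.inter (isClosed_iInter fun p => ?_) (isClosed_iInter fun x => ?_)
    · exact isClosed_le (Continuous.dist
        (continuous_eval_const _)
        (continuous_eval_const _)) continuous_const
    · exact IsClosed.preimage (continuous_eval_const _)
        (Metric.isClosed_closedBall (x := (0:Vec n)) (ε := M0))
  have hAeq : Equicontinuous ((↑) : A → (Icc (0:ℝ) M0) → Vec n) := by
    apply equicontinuous_of_continuity_modulus (b := fun d => max Cf0 0 * d)
    · simpa using (Filter.Tendsto.const_mul (max Cf0 0)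
        (continuous_id.tendsto (0:ℝ)))
    · intro x y i
      have := lipschitzWith_iff_dist_le_mul.1 i.2.1 x y
      rwa [Real.coe_toNNReal _ hCf] at this
  have hAcp : IsCompact A := by
    refine BoundedContinuousFunction.arzela_ascoli₂ (closedBall (0:Vec n) M0)
      (isCompact_closedBall _ _) A hAcl (fun h x hA => hA.2 x) hAeq
  -- extract converging subsequences
  obtain ⟨tfs, htfsI, φ1, hφ1, htfs⟩ :=
    (isCompact_Icc (a := (0:ℝ)) (b := M0)).tendsto_subseq
      (x := tf) (fun k => htfI (hadm k))
  obtain ⟨us, husmem, φ2, hφ2, hus⟩ :=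
    (isCompact_univ_pi (fun _ : ℕ => hΩcp)).tendsto_subseq
      (x := fun k => u (φ1 k)) (fun k => mem_univ_pi.2 fun i => (hadm (φ1 k)).2.2.1 i)
  obtain ⟨Qs, hQsA, φ3, hφ3, hQs⟩ := hAcp.tendsto_subseq
    (x := fun k => Qb (φ1 (φ2 k))) (fun k => ⟨hQbLip _, hQbA _⟩)
  -- the full subsequence
  set ρ : ℕ → ℕ := fun k => φ1 (φ2 (φ3 k)) with hρdef
  have hρ : StrictMono ρ := hφ1.comp (hφ2.comp hφ3)
  have htfρ : Filter.Tendsto (fun k => tf (ρ k)) Filter.atTop (nhds tfs) :=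
    htfs.comp ((hφ2.comp hφ3).tendsto_atTop)
  have husρ : ∀ i, Filter.Tendsto (fun k => u (ρ k) i) Filter.atTop (nhds (us i)) := by
    intro i
    have h1 : Filter.Tendsto (fun k => u (ρ k)) Filter.atTop (nhds us) :=
      hus.comp (hφ3.tendsto_atTop)
    exact (tendsto_pi_nhds.1 h1) i
  have hQρ : Filter.Tendsto (fun k => Qb (ρ k)) Filter.atTop (nhds Qs) := hQs
  have hdist0 : Filter.Tendsto (fun k => dist (Qb (ρ k)) Qs) Filter.atTop (nhds 0) :=
    tendsto_iff_dist_tendsto_zero.1 hQρ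
  -- the candidate optimal trajectory
  set qs : ℝ → Vec n := fun t => Qs (projIcc 0 M0 hM0 t) with hqsdef
  have hqsc : Continuous qs := Qs.continuous.comp continuous_projIcc
  have hqs_eq : ∀ t (ht : t ∈ Icc (0:ℝ) M0), qs t = Qs ⟨t, ht⟩ := by
    intro t ht
    show Qs (projIcc 0 M0 hM0 t) = Qs ⟨t, ht⟩
    rw [projIcc_of_mem hM0 ht]
  -- the central convergence fact
  have conv_at : ∀ (a : ℕ → ℝ), (∀ k, a k ∈ Icc (0:ℝ) M0) → ∀ t, ∀ ht : t ∈ Icc (0:ℝ) M0,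
      Filter.Tendsto a Filter.atTop (nhds t) →
      Filter.Tendsto (fun k => clampTo (tf (ρ k)) (q (ρ k)) (a k)) Filter.atTop
        (nhds (qs t)) := by
    intro a ha t ht hat
    rw [tendsto_iff_dist_tendsto_zero]
    have hb : Filter.Tendsto (fun k => dist (Qb (ρ k)) Qs + dist (qs (a k)) (qs t))
        Filter.atTop (nhds 0) := by
      have h2 : Filter.Tendsto (fun k => dist (qs (a k)) (qs t))
          Filter.atTop (nhds 0) :=
        tendsto_iff_dist_tendsto_zero.1 ((hqsc.continuousAt.tendsto).comp hat)
      simpa using hdist0.add h2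
    refine squeeze_zero (fun k => dist_nonneg) (fun k => ?_) hb
    calc dist (clampTo (tf (ρ k)) (q (ρ k)) (a k)) (qs t)
        ≤ dist (clampTo (tf (ρ k)) (q (ρ k)) (a k)) (qs (a k))
          + dist (qs (a k)) (qs t) := dist_triangle _ _ _
      _ ≤ dist (Qb (ρ k)) Qs + dist (qs (a k)) (qs t) := by
          apply add_le_add_left
          have h3 : clampTo (tf (ρ k)) (q (ρ k)) (a k) = Qb (ρ k) ⟨a k, ha k⟩ := rfl
          have h4 : qs (a k) = Qs ⟨a k, ha k⟩ := hqs_eq _ (ha k)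
          rw [h3, h4]
          exact BoundedContinuousFunction.dist_coe_le_dist _
  -- basic facts about the limit objects
  have husΩ : ∀ i, us i ∈ Ω := fun i => (mem_univ_pi.1 husmem) i
  have hqsle : ∀ τ, ‖qs τ‖ ≤ M0 := fun τ => mem_closedBall_zero_iff.1 (hQsA.2 _)
  have hqsmem : ∀ t (ht : t ∈ Icc (0:ℝ) M0), qs t = Qs ⟨t, ht⟩ := hqs_eq
  -- pointwise convergence of the integrands
  have hptconvf : ∀ τ ∈ Icc (0:ℝ) M0, Filter.Tendsto
      (fun k => f τ (clampTo (tf (ρ k)) (q (ρ k)) τ) (sampledCtrl T (u (ρ k)) τ))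
      Filter.atTop (nhds (f τ (qs τ) (sampledCtrl T us τ))) := by
    intro τ hτ
    have h1 := conv_at (fun _ => τ) (fun _ => hτ) τ hτ tendsto_const_nhds
    have h2 := husρ ⌊τ / T⌋₊
    have h3 : Filter.Tendsto
        (fun k => ((τ, clampTo (tf (ρ k)) (q (ρ k)) τ, u (ρ k) ⌊τ / T⌋₊) :
          ℝ × Vec n × Vec m)) Filter.atTop (nhds (τ, qs τ, us ⌊τ / T⌋₊)) :=
      tendsto_const_nhds.prodMk_nhds (h1.prodMk_nhds h2)
    exact (hf_cont.tendsto _).comp h3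
  have hptconvg : ∀ τ ∈ Icc (0:ℝ) M0, Filter.Tendsto
      (fun k => f0 τ (clampTo (tf (ρ k)) (q (ρ k)) τ) (sampledCtrl T (u (ρ k)) τ))
      Filter.atTop (nhds (f0 τ (qs τ) (sampledCtrl T us τ))) := by
    intro τ hτ
    have h1 := conv_at (fun _ => τ) (fun _ => hτ) τ hτ tendsto_const_nhds
    have h2 := husρ ⌊τ / T⌋₊
    have h3 : Filter.Tendsto
        (fun k => ((τ, clampTo (tf (ρ k)) (q (ρ k)) τ, u (ρ k) ⌊τ / T⌋₊) :
          ℝ × Vec n × Vec m)) Filter.atTop (nhds (τ, qs τ, us ⌊τ / T⌋₊)) :=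
      tendsto_const_nhds.prodMk_nhds (h1.prodMk_nhds h2)
    exact (hf0_cont.tendsto _).comp h3
  -- integrability of the limit integrands
  have hGsint : ∀ t, t ∈ Icc (0:ℝ) M0 → IntervalIntegrable
      (fun τ => f τ (qs τ) (sampledCtrl T us τ)) volume 0 t := by
    intro t ht
    refine integrable_of_bound
      ((meas_integrand T f hf_cont us hqsc).aestronglyMeasurable) (C := max Cf0 0) ?_
    intro τ hτ
    exact hfb τ (uIoc_subset_Icc' h0M ht hτ) _ (hqsle τ) _ (husΩ _)
  have hHsint : ∀ t, t ∈ Icc (0:ℝ) M0 → IntervalIntegrable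
      (fun τ => f0 τ (qs τ) (sampledCtrl T us τ)) volume 0 t := by
    intro t ht
    refine integrable_of_bound
      ((meas_integrand T f0 hf0_cont us hqsc).aestronglyMeasurable) (C := max Cg0 0) ?_
    intro τ hτ
    exact hgb τ (uIoc_subset_Icc' h0M ht hτ) _ (hqsle τ) _ (husΩ _)
  -- measurability of the integrands along the sequence
  have hGkmeas : ∀ k, StronglyMeasurable
      (fun τ => f τ (clampTo (tf (ρ k)) (q (ρ k)) τ) (sampledCtrl T (u (ρ k)) τ)) :=
    fun k => (meas_integrand T f hf_cont (u (ρ k))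
      (clampTo_continuous (hadm (ρ k)).1 (hadm (ρ k)).2.1.1)).stronglyMeasurable
  have hHkmeas : ∀ k, StronglyMeasurable
      (fun τ => f0 τ (clampTo (tf (ρ k)) (q (ρ k)) τ) (sampledCtrl T (u (ρ k)) τ)) :=
    fun k => (meas_integrand T f0 hf0_cont (u (ρ k))
      (clampTo_continuous (hadm (ρ k)).1 (hadm (ρ k)).2.1.1)).stronglyMeasurable
  -- the limit trajectory satisfies the integral equation
  have htraj : ∀ t ∈ Icc (0:ℝ) tfs,
      qs t = qs 0 + ∫ τ in (0:ℝ)..t, f τ (qs τ) (sampledCtrl T us τ) := by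
    intro t ht
    have htM : t ∈ Icc (0:ℝ) M0 := ⟨ht.1, ht.2.trans htfsI.2⟩
    have haI : ∀ k, min t (tf (ρ k)) ∈ Icc (0:ℝ) M0 :=
      fun k => ⟨le_min ht.1 (hadm (ρ k)).1, (min_le_left _ _).trans htM.2⟩
    have haI' : ∀ k, min t (tf (ρ k)) ∈ Icc (0:ℝ) (tf (ρ k)) :=
      fun k => ⟨le_min ht.1 (hadm (ρ k)).1, min_le_right _ _⟩
    have hat : Filter.Tendsto (fun k => min t (tf (ρ k))) Filter.atTop (nhds t) := by
      have := (tendsto_const_nhds (x := t) (f := Filter.atTop (α := ℕ))).min htfρ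
      rwa [min_eq_left ht.2] at this
    have heq : ∀ k, clampTo (tf (ρ k)) (q (ρ k)) (min t (tf (ρ k))) =
        clampTo (tf (ρ k)) (q (ρ k)) 0 + ∫ τ in (0:ℝ)..(min t (tf (ρ k))),
          f τ (clampTo (tf (ρ k)) (q (ρ k)) τ) (sampledCtrl T (u (ρ k)) τ) := by
      intro k
      have h0tf : (0:ℝ) ∈ Icc (0:ℝ) (tf (ρ k)) := ⟨le_refl _, (hadm (ρ k)).1⟩
      have hd := (hkey (hadm (ρ k))).2.1 0 (min t (tf (ρ k))) h0tf (haI' k)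
      rw [clampTo_eqOn _ _ (haI' k), clampTo_eqOn _ _ h0tf, ← hd]
      abel
    have hL := conv_at (fun k => min t (tf (ρ k))) haI t htM hat
    have hR0 := conv_at (fun _ => 0) (fun _ => h0M) 0 h0M tendsto_const_nhds
    have hInt := integral_conv
      (fun k τ => f τ (clampTo (tf (ρ k)) (q (ρ k)) τ) (sampledCtrl T (u (ρ k)) τ))
      (fun τ => f τ (qs τ) (sampledCtrl T us τ)) (max Cf0 0) M0 hCf
      (fun k => min t (tf (ρ k))) haI t htM hat hGkmeas
      (fun k => hfb' (hadm (ρ k))) hptconvf (hGsint t htM)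
    exact tendsto_nhds_unique ((Filter.Tendsto.congr heq) hL) (hR0.add hInt)
  -- the limit triple satisfies the endpoint constraint
  have hR0 := conv_at (fun _ => 0) (fun _ => h0M) 0 h0M tendsto_const_nhds
  have hRtf := conv_at (fun k => tf (ρ k)) (fun k => htfI (hadm (ρ k))) tfs htfsI htfρ
  have hgconv : Filter.Tendsto (fun k => g (clampTo (tf (ρ k)) (q (ρ k)) 0,
      clampTo (tf (ρ k)) (q (ρ k)) (tf (ρ k)))) Filter.atTop
      (nhds (g (qs 0, qs tfs))) :=
    (hg.tendsto _).comp (hR0.prodMk_nhds hRtf)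
  have hmemS : ∀ k, g (clampTo (tf (ρ k)) (q (ρ k)) 0,
      clampTo (tf (ρ k)) (q (ρ k)) (tf (ρ k))) ∈ S := by
    intro k
    have h0tf : (0:ℝ) ∈ Icc (0:ℝ) (tf (ρ k)) := ⟨le_refl _, (hadm (ρ k)).1⟩
    have htftf : tf (ρ k) ∈ Icc (0:ℝ) (tf (ρ k)) := ⟨(hadm (ρ k)).1, le_refl _⟩
    rw [clampTo_eqOn _ _ h0tf, clampTo_eqOn _ _ htftf]
    exact (hadm (ρ k)).2.2.2
  have hSmem : g (qs 0, qs tfs) ∈ S :=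
    hScl.mem_of_tendsto hgconv (Filter.Eventually.of_forall hmemS)
  have hadms : AdmissibleT T f g Ω S tfs us qs :=
    ⟨htfsI.1, ⟨hqsc.continuousOn, htraj⟩, husΩ, hSmem⟩
  -- convergence of the costs to the cost of the limit triple
  have hcosteq : ∀ k, costOf T f0 (tf (ρ k)) (u (ρ k)) (q (ρ k)) =
      ∫ τ in (0:ℝ)..(tf (ρ k)),
        f0 τ (clampTo (tf (ρ k)) (q (ρ k)) τ) (sampledCtrl T (u (ρ k)) τ) :=
    fun k => cost_clamp T f0 (hadm (ρ k)).1 _ _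
  have hIntc := integral_conv
    (fun k τ => f0 τ (clampTo (tf (ρ k)) (q (ρ k)) τ) (sampledCtrl T (u (ρ k)) τ))
    (fun τ => f0 τ (qs τ) (sampledCtrl T us τ)) (max Cg0 0) M0 hCg
    (fun k => tf (ρ k)) (fun k => htfI (hadm (ρ k))) tfs htfsI htfρ hHkmeas
    (fun k => hgb' (hadm (ρ k))) hptconvg (hHsint tfs htfsI)
  have hc1 : Filter.Tendsto (fun k => costOf T f0 (tf (ρ k)) (u (ρ k)) (q (ρ k)))
      Filter.atTop (nhds (∫ τ in (0:ℝ)..tfs, f0 τ (qs τ) (sampledCtrl T us τ))) :=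
    (Filter.Tendsto.congr (fun k => (hcosteq k).symm)) hIntc
  have hc2 : Filter.Tendsto (fun k => costOf T f0 (tf (ρ k)) (u (ρ k)) (q (ρ k)))
      Filter.atTop (nhds (sInf CS)) := hcost_tendsto.comp hρ.tendsto_atTop
  have hfinal : costOf T f0 tfs us qs = sInf CS := tendsto_nhds_unique hc1 hc2
  refine ⟨tfs, us, qs, hadms, ?_⟩
  intro tf' u' q' h'
  rw [hfinal]
  exact csInf_le hCSbdd ⟨tf', u', q', h', rfl⟩

end
end

section
/- Optimal consumption with permanent control (continuous case 𝕋 = 𝕋₁ = ℝ⁺): For every measurable u : [0,12] → [0,1], C(u) ≤ e^{11}. The control u* equal to 1 on [0,11) and to 0 on [11,12) satisfies C(u*) = e^{11}, and any measurable u : [0,12] → [0,1] with C(u) = e^{11} agrees with u* almost everywhere on [0,12). -/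
open MeasureTheory Set
open scoped ENNReal NNReal

noncomputable section

/-- The output `q_u(t) = exp(∫₀ᵗ u(s) ds)`, unique solution of `q̇ = u q`, `q(0) = 1`. -/
def outputOf (u : ℝ → ℝ) (t : ℝ) : ℝ := Real.exp (∫ s in (0:ℝ)..t, u s)

/-- The total consumption `C(u) = ∫₀¹² (1 − u(t)) q_u(t) dt`. -/
def consumption (u : ℝ → ℝ) : ℝ := ∫ t in (0:ℝ)..12, (1 - u t) * outputOf u t

/-- The candidate optimal permanent control: `1` on `[0,11)` and `0` on `[11,12)`. -/
def uStar : ℝ → ℝ := fun t => if t < 11 then 1 else 0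

namespace OC

/-- primitive of the control -/
def Iu (u : ℝ → ℝ) (t : ℝ) : ℝ := ∫ s in (0:ℝ)..t, u s

section UStar

lemma bdd_intInt {f : ℝ → ℝ} (hf : Measurable f) {M : ℝ} (hM : ∀ t, |f t| ≤ M) :
    ∀ a b : ℝ, IntervalIntegrable f volume a b := by
  intro a b
  rw [intervalIntegrable_iff]
  exact (integrableOn_const measure_Ioc_lt_top.ne).mono'
    hf.aestronglyMeasurable
    (Filter.Eventually.of_forall fun t => by rw [Real.norm_eq_abs]; exact hM t)

lemma uStar_measurable : Measurable uStar := by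
  have : uStar = (Iio (11:ℝ)).indicator (fun _ => (1:ℝ)) := by
    ext t; rw [uStar, Set.indicator]; simp [mem_Iio]
  rw [this]
  exact measurable_const.indicator measurableSet_Iio

lemma uStar_bounds : ∀ t, uStar t ∈ Icc (0:ℝ) 1 := by
  intro t; rw [uStar]; split <;> norm_num

lemma uStar_intInt : ∀ a b : ℝ, IntervalIntegrable uStar volume a b :=
  bdd_intInt uStar_measurable (M := 1) fun t => by
    rw [abs_le]; exact ⟨by linarith [(uStar_bounds t).1], (uStar_bounds t).2⟩

lemma ae_ne_eleven : ∀ᵐ x : ℝ ∂volume, x ≠ (11:ℝ) := by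
  rw [ae_iff]
  have : {a : ℝ | ¬a ≠ 11} = {(11:ℝ)} := by ext a; simp
  rw [this]; exact measure_singleton _

lemma IuStar_eleven : Iu uStar 11 = 11 := by
  have h : Iu uStar 11 = ∫ t in (0:ℝ)..11, (1:ℝ) := by
    refine intervalIntegral.integral_congr_ae ?_
    filter_upwards [ae_ne_eleven] with t htne htmem
    rw [uIoc_of_le (by norm_num : (0:ℝ) ≤ 11)] at htmem
    rw [uStar, if_pos (lt_of_le_of_ne htmem.2 htne)]
  rw [h]; simp

lemma IuStar_ge {t : ℝ} (ht : 11 ≤ t) : Iu uStar t = 11 := by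
  have hsplit : Iu uStar 11 + ∫ s in (11:ℝ)..t, uStar s = Iu uStar t :=
    intervalIntegral.integral_add_adjacent_intervals (uStar_intInt 0 11) (uStar_intInt 11 t)
  have hz : ∫ s in (11:ℝ)..t, uStar s = 0 := by
    have h : ∫ s in (11:ℝ)..t, uStar s = ∫ s in (11:ℝ)..t, (0:ℝ) := by
      refine intervalIntegral.integral_congr fun s hs => ?_
      rw [uIcc_of_le ht] at hs
      rw [uStar, if_neg (not_lt.2 hs.1)]
    rw [h]; simp
  rw [← hsplit, hz, IuStar_eleven]; ring

theorem consumption_uStar : consumption uStar = Real.exp 11 := by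
  set g : ℝ → ℝ := fun t => if t < 11 then 0 else Real.exp 11 with hg
  have hgm : Measurable g := by
    have : g = (Iio (11:ℝ)).indicator (fun _ => (0:ℝ))
        + (Iio (11:ℝ))ᶜ.indicator (fun _ => Real.exp 11) := by
      ext t
      rcases lt_or_ge t 11 with h | h
      · simp [hg, Set.indicator, mem_Iio, h, not_le.2 h]
      · simp [hg, Set.indicator, mem_Iio, not_lt.2 h, h]
    rw [this]
    exact (measurable_const.indicator measurableSet_Iio).add
      (measurable_const.indicator measurableSet_Iio.compl)
  have hgint : ∀ a b : ℝ, IntervalIntegrable g volume a b :=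
    bdd_intInt hgm (M := Real.exp 11) fun t => by
      rw [hg]; dsimp only; split
      · rw [abs_zero]; positivity
      · rw [abs_of_pos (Real.exp_pos _)]
  have hcons : consumption uStar = ∫ t in (0:ℝ)..12, g t := by
    rw [consumption]
    refine intervalIntegral.integral_congr_ae ?_
    filter_upwards [ae_ne_eleven] with t htne htmem
    rw [uIoc_of_le (by norm_num : (0:ℝ) ≤ 12)] at htmem
    by_cases h : t < 11
    · rw [hg]; dsimp only; rw [if_pos h]
      have : uStar t = 1 := by rw [uStar, if_pos h]
      rw [this]; ring
    · have h11 : 11 ≤ t := not_lt.1 h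
      have h11' : (11:ℝ) < t := lt_of_le_of_ne h11 (Ne.symm htne)
      have hu0 : uStar t = 0 := by rw [uStar, if_neg h]
      have hout : outputOf uStar t = Real.exp 11 := by
        rw [outputOf]
        have : (∫ s in (0:ℝ)..t, uStar s) = 11 := IuStar_ge h11
        rw [this]
      rw [hg]; dsimp only; rw [if_neg h, hu0, hout]; ring
  rw [hcons, ← intervalIntegral.integral_add_adjacent_intervals
    (hgint 0 11) (hgint 11 12)]
  have e1 : ∫ t in (0:ℝ)..11, g t = 0 := by
    have h : ∫ t in (0:ℝ)..11, g t = ∫ t in (0:ℝ)..11, (0:ℝ) := by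
      refine intervalIntegral.integral_congr_ae ?_
      filter_upwards [ae_ne_eleven] with t htne htmem
      rw [uIoc_of_le (by norm_num : (0:ℝ) ≤ 11)] at htmem
      rw [hg]; dsimp only; rw [if_pos (lt_of_le_of_ne htmem.2 htne)]
    rw [h]; simp
  have e2 : ∫ t in (11:ℝ)..12, g t = Real.exp 11 := by
    have h : ∫ t in (11:ℝ)..12, g t = ∫ t in (11:ℝ)..12, Real.exp 11 := by
      refine intervalIntegral.integral_congr fun t ht => ?_
      rw [uIcc_of_le (by norm_num : (11:ℝ) ≤ 12)] at ht
      rw [hg]; dsimp only; rw [if_neg (not_lt.2 ht.1)]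
    rw [h, intervalIntegral.integral_const, smul_eq_mul]; ring
  rw [e1, e2]; ring


end UStar

-- ### clamping a control to [0,1]

def clamp (v : ℝ → ℝ) : ℝ → ℝ := fun t => max 0 (min 1 (v t))

lemma clamp_measurable {v : ℝ → ℝ} (hv : Measurable v) : Measurable (clamp v) :=
  measurable_const.max (measurable_const.min hv)

lemma clamp_bounds (v : ℝ → ℝ) : ∀ t, clamp v t ∈ Icc (0:ℝ) 1 :=
  fun t => ⟨le_max_left _ _, max_le (by norm_num) (min_le_left _ _)⟩

lemma clamp_eqOn {v : ℝ → ℝ} (hIcc : ∀ t ∈ Icc (0:ℝ) 12, v t ∈ Icc (0:ℝ) 1) :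
    ∀ t ∈ Icc (0:ℝ) 12, clamp v t = v t := by
  intro t ht
  rw [clamp, min_eq_right (hIcc t ht).2, max_eq_right (hIcc t ht).1]

lemma clamp_consumption {v : ℝ → ℝ} (hIcc : ∀ t ∈ Icc (0:ℝ) 12, v t ∈ Icc (0:ℝ) 1) :
    consumption (clamp v) = consumption v := by
  rw [consumption, consumption]
  refine intervalIntegral.integral_congr fun t ht => ?_
  rw [uIcc_of_le (by norm_num : (0:ℝ) ≤ 12)] at ht
  have hout : outputOf (clamp v) t = outputOf v t := by
    rw [outputOf, outputOf]
    congr 1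
    refine intervalIntegral.integral_congr fun s hs => ?_
    rw [uIcc_of_le ht.1] at hs
    exact clamp_eqOn hIcc s ⟨hs.1, le_trans hs.2 ht.2⟩
  rw [hout, clamp_eqOn hIcc t ht]


variable {u : ℝ → ℝ} (hm : Measurable u) (hb : ∀ t, u t ∈ Icc (0:ℝ) 1)

include hm hb

lemma intInt : ∀ a b : ℝ, IntervalIntegrable u volume a b := by
  intro a b
  rw [intervalIntegrable_iff]
  exact (integrableOn_const (C := (1:ℝ)) measure_Ioc_lt_top.ne).mono'
    hm.aestronglyMeasurable
    (Filter.Eventually.of_forall fun t => by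
      rw [Real.norm_eq_abs, abs_le]
      exact ⟨by linarith [(hb t).1], (hb t).2⟩)

lemma Iu_mono : Monotone (Iu u) := by
  intro a b hab
  have h := intervalIntegral.integral_interval_sub_left (intInt hm hb 0 b) (intInt hm hb 0 a)
  have h2 : 0 ≤ ∫ x in a..b, u x :=
    intervalIntegral.integral_nonneg hab (fun x _ => (hb x).1)
  simp only [Iu]; linarith [h, h2]

lemma Iu_cont : Continuous (Iu u) :=
  intervalIntegral.continuous_primitive (intInt hm hb) 0

omit hm hb in
lemma Iu_zero : Iu u 0 = 0 := by simp [Iu]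

lemma Iu_nonneg {t : ℝ} (ht : 0 ≤ t) : 0 ≤ Iu u t := by
  have := Iu_mono hm hb ht; rwa [Iu_zero] at this

/-- the control measure: `u dt` on `(0,12]`. -/
def ctrlMeas (u : ℝ → ℝ) : Measure ℝ :=
  (volume.restrict (Ioc (0:ℝ) 12)).withDensity (fun t => (Real.toNNReal (u t) : ℝ≥0∞))

lemma ctrl_Ioc {τ : ℝ} (h0 : 0 ≤ τ) (h12 : τ ≤ 12) :
    ctrlMeas u (Ioc 0 τ) = ENNReal.ofReal (Iu u τ) := by
  rw [ctrlMeas, withDensity_apply _ measurableSet_Ioc,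
    Measure.restrict_restrict measurableSet_Ioc,
    Set.inter_eq_self_of_subset_left (Ioc_subset_Ioc_right h12)]
  have hint : IntegrableOn u (Ioc 0 τ) volume := by
    have := intInt hm hb 0 τ; rwa [intervalIntegrable_iff, uIoc_of_le h0] at this
  have := ofReal_integral_eq_lintegral_ofReal hint
    (Filter.Eventually.of_forall fun t => (hb t).1)
  have hcongr : ∫⁻ a in Ioc (0:ℝ) τ, ((u a).toNNReal : ℝ≥0∞)
      = ∫⁻ a in Ioc (0:ℝ) τ, ENNReal.ofReal (u a) := rfl
  rw [Iu, intervalIntegral.integral_of_le h0, hcongr, ← this]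

lemma ctrl_preimage {y : ℝ} (hy : 0 ≤ y) :
    ctrlMeas u (Iu u ⁻¹' Iic y) = ENNReal.ofReal (min y (Iu u 12)) := by
  set T : Set ℝ := Icc 0 12 ∩ Iu u ⁻¹' Iic y with hT
  have hTne : T.Nonempty := ⟨0, ⟨le_refl _, by norm_num⟩, by simp [Iu_zero, hy]⟩
  have hTbdd : BddAbove T := BddAbove.mono (fun t ht => ht.1) bddAbove_Icc
  have hTclosed : IsClosed T :=
    isClosed_Icc.inter (IsClosed.preimage (Iu_cont hm hb) isClosed_Iic)
  set τ := sSup T with hτ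
  have hτT : τ ∈ T := hTclosed.csSup_mem hTne hTbdd
  have hτ0 : 0 ≤ τ := hτT.1.1
  have hτ12 : τ ≤ 12 := hτT.1.2
  have hIτ : Iu u τ ≤ y := hτT.2
  -- the relevant part of the preimage is Ioc 0 τ
  have hSet : Iu u ⁻¹' Iic y ∩ Ioc 0 12 = Ioc 0 τ := by
    ext t
    constructor
    · rintro ⟨ht1, ht2⟩
      exact ⟨ht2.1, le_csSup hTbdd ⟨⟨le_of_lt ht2.1, ht2.2⟩, ht1⟩⟩
    · rintro ⟨ht1, ht2⟩
      exact ⟨le_trans (Iu_mono hm hb ht2) hIτ, ht1, le_trans ht2 hτ12⟩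
  have hμ : ctrlMeas u (Iu u ⁻¹' Iic y) = ctrlMeas u (Ioc 0 τ) := by
    rw [← hSet, ctrlMeas, withDensity_apply _
        ((Iu_cont hm hb).measurable measurableSet_Iic),
      withDensity_apply _ (((Iu_cont hm hb).measurable measurableSet_Iic).inter
        measurableSet_Ioc),
      Measure.restrict_restrict ((Iu_cont hm hb).measurable measurableSet_Iic),
      Measure.restrict_restrict (((Iu_cont hm hb).measurable measurableSet_Iic).inter
        measurableSet_Ioc), Set.inter_assoc, Set.inter_self]
  rw [hμ, ctrl_Ioc hm hb hτ0 hτ12]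
  congr 1
  -- Iu τ = min y (Iu 12)
  rcases le_or_gt (Iu u 12) y with h | h
  · have h12T : (12:ℝ) ∈ T := ⟨⟨by norm_num, le_refl _⟩, h⟩
    have : τ = 12 := le_antisymm hτ12 (le_csSup hTbdd h12T)
    rw [this, min_eq_right h]
  · rw [min_eq_left h.le]
    by_contra hne
    have hlt : Iu u τ < y := lt_of_le_of_ne hIτ hne
    have hτlt12 : τ < 12 := by
      rcases lt_or_eq_of_le hτ12 with h' | h'
      · exact h'
      · exfalso; rw [h'] at hlt; linarith
    -- find a point of T beyond τ
    have hev : ∀ᶠ t in nhdsWithin τ (Ioi τ), Iu u t < y ∧ t < 12 :=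
      Filter.Eventually.and
        (nhdsWithin_le_nhds (((Iu_cont hm hb).continuousAt).eventually_lt_const hlt))
        (nhdsWithin_le_nhds (Filter.Tendsto.eventually_lt_const hτlt12 Filter.tendsto_id))
    obtain ⟨t, ⟨hty, ht12⟩, htτ⟩ := (hev.and (eventually_mem_nhdsWithin)).exists
    have : t ∈ T := ⟨⟨le_trans hτ0 htτ.le, ht12.le⟩, hty.le⟩
    exact absurd (le_csSup hTbdd this) (not_le.2 htτ)

lemma ctrl_map : (ctrlMeas u).map (Iu u) = volume.restrict (Ioc 0 (Iu u 12)) := by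
  have hIm : Measurable (Iu u) := (Iu_cont hm hb).measurable
  have hfin : IsFiniteMeasure ((ctrlMeas u).map (Iu u)) := by
    constructor
    rw [Measure.map_apply hIm MeasurableSet.univ, Set.preimage_univ, ctrlMeas,
      withDensity_apply _ MeasurableSet.univ]
    calc ∫⁻ t in Set.univ, (Real.toNNReal (u t) : ℝ≥0∞) ∂(volume.restrict (Ioc (0:ℝ) 12))
        ≤ ∫⁻ _ in Set.univ, 1 ∂(volume.restrict (Ioc (0:ℝ) 12)) := by
          apply lintegral_mono_ae
          refine Filter.Eventually.of_forall fun t => ?_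
          simp only [ENNReal.coe_le_one_iff]
          exact Real.toNNReal_le_one.2 (hb t).2
      _ < ⊤ := by
          rw [setLIntegral_one, Measure.restrict_apply MeasurableSet.univ]
          simp [measure_Ioc_lt_top]
  refine @Measure.ext_of_Iic ℝ _ _ _ _ _ _ _ _ hfin fun y => ?_
  rw [Measure.map_apply hIm measurableSet_Iic,
    Measure.restrict_apply measurableSet_Iic]
  rcases lt_or_ge y 0 with hy | hy
  · have h1 : Iu u ⁻¹' Iic y ∩ Ioc (0:ℝ) 12 = ∅ := by
      ext t; simp only [mem_inter_iff, mem_preimage, mem_Iic, mem_Ioc, mem_empty_iff_false,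
        iff_false, not_and]
      intro h1 h2
      exact absurd (le_trans (Iu_nonneg hm hb h2.le) h1) (not_le.2 hy)
    have h2 : Iic y ∩ Ioc (0:ℝ) (Iu u 12) = ∅ := by
      ext t; simp only [mem_inter_iff, mem_Iic, mem_Ioc, mem_empty_iff_false, iff_false, not_and]
      intro h1 h2; linarith
    rw [h2]
    have : ctrlMeas u (Iu u ⁻¹' Iic y) = 0 := by
      rw [ctrlMeas, withDensity_apply _ (hIm measurableSet_Iic),
        Measure.restrict_restrict (hIm measurableSet_Iic), h1]
      simp
    rw [this]; simp
  · rw [ctrl_preimage hm hb hy]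
    have : Iic y ∩ Ioc (0:ℝ) (Iu u 12) = Ioc 0 (min y (Iu u 12)) := by
      ext t; simp only [mem_inter_iff, mem_Iic, mem_Ioc, le_min_iff]
      tauto
    rw [this, Real.volume_Ioc]
    norm_num

lemma key_identity :
    ∫ t in (0:ℝ)..12, u t * Real.exp (Iu u t) = Real.exp (Iu u 12) - 1 := by
  have hIm : Measurable (Iu u) := (Iu_cont hm hb).measurable
  have hA0 : 0 ≤ Iu u 12 := Iu_nonneg hm hb (by norm_num)
  have step1 : ∫ t in (0:ℝ)..12, u t * Real.exp (Iu u t)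
      = ∫ t, Real.toNNReal (u t) • Real.exp (Iu u t) ∂(volume.restrict (Ioc (0:ℝ) 12)) := by
    rw [intervalIntegral.integral_of_le (by norm_num : (0:ℝ) ≤ 12)]
    refine integral_congr_ae (Filter.Eventually.of_forall fun t => ?_)
    simp only [NNReal.smul_def, Real.coe_toNNReal _ (hb t).1, smul_eq_mul]
  have step2 : ∫ t, Real.toNNReal (u t) • Real.exp (Iu u t) ∂(volume.restrict (Ioc (0:ℝ) 12))
      = ∫ t, Real.exp (Iu u t) ∂(ctrlMeas u) := by
    rw [ctrlMeas, integral_withDensity_eq_integral_smul hm.real_toNNReal]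
  have step3 : ∫ t, Real.exp (Iu u t) ∂(ctrlMeas u)
      = ∫ x, Real.exp x ∂((ctrlMeas u).map (Iu u)) := by
    rw [integral_map hIm.aemeasurable Real.continuous_exp.aestronglyMeasurable]
  rw [step1, step2, step3, ctrl_map hm hb, ← intervalIntegral.integral_of_le hA0,
    integral_exp]
  simp


lemma Iu_le_self {t : ℝ} (ht : 0 ≤ t) : Iu u t ≤ t := by
  calc Iu u t ≤ ∫ s in (0:ℝ)..t, (1:ℝ) :=
        intervalIntegral.integral_mono_on ht (intInt hm hb 0 t)
          intervalIntegrable_const (fun x _ => (hb x).2)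
    _ = t := by simp

lemma expIu_intInt : ∀ a b : ℝ, IntervalIntegrable (fun t => Real.exp (Iu u t)) volume a b :=
  fun a b => ((Real.continuous_exp.comp (Iu_cont hm hb)).intervalIntegrable a b)

lemma mulexp_intInt : ∀ a b : ℝ, IntervalIntegrable (fun t => u t * Real.exp (Iu u t)) volume a b :=
  fun a b => (intInt hm hb a b).mul_continuousOn
    ((Real.continuous_exp.comp (Iu_cont hm hb)).continuousOn)

lemma consumption_eq :
    consumption u = (∫ t in (0:ℝ)..12, Real.exp (Iu u t)) - Real.exp (Iu u 12) + 1 := by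
  have h : consumption u
      = ∫ t in (0:ℝ)..12, (Real.exp (Iu u t) - u t * Real.exp (Iu u t)) := by
    refine intervalIntegral.integral_congr fun t _ => ?_
    show (1 - u t) * outputOf u t = _
    rw [outputOf]; show (1 - u t) * Real.exp (Iu u t) = _; ring
  rw [h, intervalIntegral.integral_sub (expIu_intInt hm hb 0 12) (mulexp_intInt hm hb 0 12),
    key_identity hm hb]
  ring

omit hm hb in
lemma min_integral {A : ℝ} (hA0 : 0 ≤ A) (hA12 : A ≤ 12) :
    ∫ t in (0:ℝ)..12, Real.exp (min t A) = (Real.exp A - 1) + (12 - A) * Real.exp A := by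
  have hc : Continuous fun t : ℝ => Real.exp (min t A) :=
    Real.continuous_exp.comp (continuous_id.min continuous_const)
  rw [← intervalIntegral.integral_add_adjacent_intervals (a := (0:ℝ)) (b := A) (c := 12)
    (hc.intervalIntegrable 0 A) (hc.intervalIntegrable A 12)]
  have h1 : ∫ t in (0:ℝ)..A, Real.exp (min t A) = ∫ t in (0:ℝ)..A, Real.exp t := by
    refine intervalIntegral.integral_congr fun t ht => ?_
    rw [uIcc_of_le hA0] at ht
    rw [min_eq_left ht.2]
  have h2 : ∫ t in A..(12:ℝ), Real.exp (min t A) = ∫ t in A..(12:ℝ), Real.exp A := by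
    refine intervalIntegral.integral_congr fun t ht => ?_
    rw [uIcc_of_le hA12] at ht
    rw [min_eq_right ht.1]
  rw [h1, h2, integral_exp, intervalIntegral.integral_const, smul_eq_mul]
  simp

lemma int_exp_le :
    ∫ t in (0:ℝ)..12, Real.exp (Iu u t)
      ≤ ∫ t in (0:ℝ)..12, Real.exp (min t (Iu u 12)) := by
  refine intervalIntegral.integral_mono_on (by norm_num) (expIu_intInt hm hb 0 12)
    ((Real.continuous_exp.comp (continuous_id.min continuous_const)).intervalIntegrable 0 12)
    fun t ht => ?_
  exact Real.exp_le_exp.2 (le_min (Iu_le_self hm hb ht.1) (Iu_mono hm hb ht.2))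

omit hm hb in
lemma aux_le {A : ℝ} : (12 - A) * Real.exp A ≤ Real.exp 11 := by
  have h := Real.add_one_le_exp (11 - A)
  have h2 : Real.exp (11 - A) * Real.exp A = Real.exp 11 := by
    rw [← Real.exp_add]; norm_num
  nlinarith [Real.exp_pos A]

omit hm hb in
lemma aux_lt {A : ℝ} (hA : A ≠ 11) : (12 - A) * Real.exp A < Real.exp 11 := by
  have h := Real.add_one_lt_exp (x := 11 - A) (by intro h; apply hA; linarith)
  have h2 : Real.exp (11 - A) * Real.exp A = Real.exp 11 := by
    rw [← Real.exp_add]; norm_num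
  nlinarith [Real.exp_pos A]

lemma consumption_le_bound :
    consumption u ≤ (12 - Iu u 12) * Real.exp (Iu u 12) := by
  have hA0 : 0 ≤ Iu u 12 := Iu_nonneg hm hb (by norm_num)
  have hA12 : Iu u 12 ≤ 12 := Iu_le_self hm hb (by norm_num)
  rw [consumption_eq hm hb]
  have := int_exp_le hm hb
  rw [min_integral hA0 hA12] at this
  linarith

lemma consumption_le : consumption u ≤ Real.exp 11 :=
  le_trans (consumption_le_bound hm hb) aux_le


lemma eq_case (hC : consumption u = Real.exp 11) :
    ∀ᵐ t ∂(volume.restrict (Ico (0:ℝ) 12)), u t = uStar t := by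
  have hA : Iu u 12 = 11 := by
    by_contra hne
    have h1 := consumption_le_bound hm hb
    have h2 := aux_lt hne
    rw [hC] at h1; linarith
  -- ∫ exp(Iu) equals the integral of the majorant
  have hint : ∫ t in (0:ℝ)..12, Real.exp (Iu u t)
      = ∫ t in (0:ℝ)..12, Real.exp (min t 11) := by
    have h := consumption_eq hm hb
    rw [hC, hA] at h
    rw [min_integral (by norm_num : (0:ℝ) ≤ 11) (by norm_num)]
    linarith
  -- pointwise bound
  have hptwise : ∀ t ∈ Icc (0:ℝ) 12, Real.exp (Iu u t) ≤ Real.exp (min t 11) := by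
    intro t ht
    refine Real.exp_le_exp.2 (le_min (Iu_le_self hm hb ht.1) ?_)
    rw [← hA]; exact Iu_mono hm hb ht.2
  -- a.e. equality Iu = min · 11 on (0,12]
  have hcont : Continuous fun t : ℝ => Real.exp (min t 11) - Real.exp (Iu u t) :=
    (Real.continuous_exp.comp (continuous_id.min continuous_const)).sub
      (Real.continuous_exp.comp (Iu_cont hm hb))
  have haeIu : ∀ᵐ t ∂(volume.restrict (Ioc (0:ℝ) 12)), Iu u t = min t 11 := by
    have hnn : 0 ≤ᵐ[volume.restrict (Ioc (0:ℝ) 12)]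
        fun t => Real.exp (min t 11) - Real.exp (Iu u t) := by
      filter_upwards [ae_restrict_mem measurableSet_Ioc] with t ht
      have := hptwise t ⟨ht.1.le, ht.2⟩
      simp only [Pi.zero_apply]; linarith
    have hminc : Continuous fun t : ℝ => Real.exp (min t 11) := by fun_prop
    have hmin : IntervalIntegrable (fun t : ℝ => Real.exp (min t 11)) volume 0 12 :=
      hminc.intervalIntegrable 0 12
    have hintg : Integrable (fun t => Real.exp (min t 11) - Real.exp (Iu u t))
        (volume.restrict (Ioc (0:ℝ) 12)) := by
      have h' : IntervalIntegrable (fun t => Real.exp (min t 11) - Real.exp (Iu u t))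
          volume 0 12 := hmin.sub (expIu_intInt hm hb 0 12)
      rwa [intervalIntegrable_iff, uIoc_of_le (by norm_num : (0:ℝ) ≤ 12)] at h'
    have hzero : ∫ t in Ioc (0:ℝ) 12, (Real.exp (min t 11) - Real.exp (Iu u t)) = 0 := by
      rw [← intervalIntegral.integral_of_le (by norm_num : (0:ℝ) ≤ 12),
        intervalIntegral.integral_sub hmin (expIu_intInt hm hb 0 12), hint]
      ring
    have := (integral_eq_zero_iff_of_nonneg_ae hnn hintg).1 hzero
    filter_upwards [this] with t ht
    have : Real.exp (min t 11) = Real.exp (Iu u t) := by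
      have h0 : Real.exp (min t 11) - Real.exp (Iu u t) = 0 := ht
      linarith
    exact (Real.exp_injective this).symm
  -- Iu 11 = 11
  have hI11 : Iu u 11 = 11 := by
    have hle : Iu u 11 ≤ 11 := Iu_le_self hm hb (by norm_num)
    by_contra hne
    have hlt : Iu u 11 < 11 := lt_of_le_of_ne hle hne
    set c := max 0 (Iu u 11) with hc_def
    have hc : c < 11 := max_lt (by norm_num) hlt
    have hsub : Ioo c 11 ⊆ Ioc (0:ℝ) 12 := fun t ht =>
      ⟨lt_of_le_of_lt (le_max_left _ _) ht.1, by linarith [ht.2]⟩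
    have hres : ∀ᵐ t ∂(volume.restrict (Ioo c 11)), Iu u t = min t 11 :=
      ae_restrict_of_ae_restrict_of_subset hsub haeIu
    have hne0 : volume.restrict (Ioo c 11) ≠ 0 := by
      rw [Ne, Measure.restrict_eq_zero, Real.volume_Ioo]
      simp only [ENNReal.ofReal_eq_zero, not_le]
      linarith
    haveI : (ae (volume.restrict (Ioo c 11))).NeBot := ae_neBot.2 hne0
    obtain ⟨t, htmem, hteq⟩ := ((ae_restrict_mem measurableSet_Ioo).and hres).exists
    have ht11 : min t 11 = t := min_eq_left htmem.2.le
    have h1 : Iu u t = t := by rw [hteq, ht11]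
    have h2 : Iu u t ≤ Iu u 11 := Iu_mono hm hb htmem.2.le
    have h3 : Iu u 11 ≤ c := le_max_right _ _
    linarith [htmem.1]
  -- u = 1 a.e. on (0,11]
  have h1 : ∀ᵐ t ∂(volume.restrict (Ioc (0:ℝ) 11)), 1 - u t = 0 := by
    have hnn : 0 ≤ᵐ[volume.restrict (Ioc (0:ℝ) 11)] fun t => 1 - u t :=
      Filter.Eventually.of_forall fun t => by
        simp only [Pi.zero_apply]; linarith [(hb t).2]
    have hintg : Integrable (fun t => 1 - u t) (volume.restrict (Ioc (0:ℝ) 11)) := by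
      have := (intervalIntegrable_const (c := (1:ℝ))).sub (intInt hm hb 0 11)
      rwa [intervalIntegrable_iff, uIoc_of_le (by norm_num : (0:ℝ) ≤ 11)] at this
    have hzero : ∫ t in Ioc (0:ℝ) 11, (1 - u t) = 0 := by
      rw [← intervalIntegral.integral_of_le (by norm_num : (0:ℝ) ≤ 11),
        intervalIntegral.integral_sub intervalIntegrable_const (intInt hm hb 0 11)]
      have : ∫ t in (0:ℝ)..11, u t = Iu u 11 := rfl
      rw [this, hI11]
      simp
    exact (integral_eq_zero_iff_of_nonneg_ae hnn hintg).1 hzero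
  -- u = 0 a.e. on (11,12]
  have h2 : ∀ᵐ t ∂(volume.restrict (Ioc (11:ℝ) 12)), u t = 0 := by
    have hnn : 0 ≤ᵐ[volume.restrict (Ioc (11:ℝ) 12)] u :=
      Filter.Eventually.of_forall fun t => (hb t).1
    have hintg : Integrable u (volume.restrict (Ioc (11:ℝ) 12)) := by
      have := intInt hm hb 11 12
      rwa [intervalIntegrable_iff, uIoc_of_le (by norm_num : (11:ℝ) ≤ 12)] at this
    have hzero : ∫ t in Ioc (11:ℝ) 12, u t = 0 := by
      rw [← intervalIntegral.integral_of_le (by norm_num : (11:ℝ) ≤ 12)]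
      have := intervalIntegral.integral_interval_sub_left (intInt hm hb 0 12) (intInt hm hb 0 11)
      have h12 : (∫ t in (0:ℝ)..12, u t) = 11 := hA
      have h11 : (∫ t in (0:ℝ)..11, u t) = 11 := hI11
      rw [h12, h11] at this
      linarith
    have := (integral_eq_zero_iff_of_nonneg_ae hnn hintg).1 hzero
    filter_upwards [this] with t ht using ht
  -- combine
  have hset : volume.restrict (Ico (0:ℝ) 12)
      = volume.restrict (Ioc (0:ℝ) 11 ∪ Ioc 11 12) := by
    rw [Ioc_union_Ioc_eq_Ioc (by norm_num : (0:ℝ) ≤ 11) (by norm_num : (11:ℝ) ≤ 12)]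
    exact Measure.restrict_congr_set Ico_ae_eq_Ioc
  rw [hset, ae_restrict_union_iff]
  constructor
  · have hne11 : ∀ᵐ t ∂(volume.restrict (Ioc (0:ℝ) 11)), t ≠ (11:ℝ) := by
      refine ae_restrict_of_ae ?_
      rw [ae_iff]
      have : {a : ℝ | ¬a ≠ 11} = {(11:ℝ)} := by ext a; simp
      rw [this]; exact measure_singleton _
    filter_upwards [h1, ae_restrict_mem measurableSet_Ioc, hne11] with t ht htmem htne
    have htlt : t < 11 := lt_of_le_of_ne htmem.2 htne
    rw [uStar]; simp only [if_pos htlt]; linarith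
  · filter_upwards [h2, ae_restrict_mem measurableSet_Ioc] with t ht htmem
    have : ¬ t < 11 := not_lt.2 htmem.1.le
    rw [uStar]; simp only [if_neg this]; exact ht


end OC

/-- Optimal consumption with permanent control (continuous case `𝕋 = 𝕋₁ = ℝ⁺`):
the optimal value is `e¹¹`, attained by `uStar`, and any optimal control agrees
with `uStar` almost everywhere on `[0,12)`. -/
theorem optimal_consumption_permanent_control :
    (∀ u : ℝ → ℝ, Measurable u → (∀ t ∈ Icc (0:ℝ) 12, u t ∈ Icc (0:ℝ) 1) →
      consumption u ≤ Real.exp 11) ∧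
    consumption uStar = Real.exp 11 ∧
    (∀ u : ℝ → ℝ, Measurable u → (∀ t ∈ Icc (0:ℝ) 12, u t ∈ Icc (0:ℝ) 1) →
      consumption u = Real.exp 11 →
      ∀ᵐ t ∂(volume.restrict (Ico (0:ℝ) 12)), u t = uStar t) := by
  refine ⟨fun u hm hIcc => ?_, OC.consumption_uStar, fun u hm hIcc hC => ?_⟩
  · rw [← OC.clamp_consumption hIcc]
    exact OC.consumption_le (OC.clamp_measurable hm) (OC.clamp_bounds u)
  · have h := OC.eq_case (OC.clamp_measurable hm) (OC.clamp_bounds u)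
      (by rw [OC.clamp_consumption hIcc]; exact hC)
    filter_upwards [h, ae_restrict_mem measurableSet_Ico] with t ht htmem
    rw [← OC.clamp_eqOn hIcc t ⟨htmem.1, htmem.2.le⟩]
    exact ht

end
end

section
/- Optimal consumption with sampled-data control of sampling period 2 (continuous case 𝕋 = ℝ⁺, 𝕋₁ = 2ℕ): For every v = (v₀, …, v₅) ∈ [0,1]⁶, letting u_v : [0,12] → [0,1] be defined by u_v(t) = v_{⌊t/2⌋}, one has C(u_v) ≤ 2 e^{10}, with equality if and only if v = (1,1,1,1,1,0). -/
open MeasureTheory Set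

noncomputable section

open Fin.NatCast in
/-- The sampled-data control of sampling period 2 associated with `v ∈ [0,1]⁶`:
`u_v(t) = v_{⌊t/2⌋}`. -/
def uSampled2 (v : Fin 6 → ℝ) : ℝ → ℝ := fun t => v ((⌊t / 2⌋₊ : ℕ) : Fin 6)

open scoped Interval

/-! ### Auxiliary definitions and scalar lemmas -/

/-- The one-period consumption factor `f(v) = ∫₀² (1-v) e^{v s} ds`. -/
def fper (v : ℝ) : ℝ := (1 - v) * ∫ s in (0:ℝ)..2, Real.exp (v * s)

lemma integral_exp_mul (v : ℝ) (hv : v ≠ 0) :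
    (∫ s in (0:ℝ)..2, Real.exp (v * s)) = (Real.exp (2*v) - 1) / v := by
  have h : ∀ s ∈ uIcc (0:ℝ) 2, HasDerivAt (fun x => Real.exp (v * x) / v) (Real.exp (v * s)) s := by
    intro s _
    have := ((Real.hasDerivAt_exp (v*s)).comp s ((hasDerivAt_id s).const_mul v))
    simpa [mul_comm, mul_div_cancel_left₀ _ hv] using this.div_const v
  rw [intervalIntegral.integral_eq_sub_of_hasDerivAt h]
  · rw [mul_comm, mul_zero, Real.exp_zero]; ring
  · exact (Real.continuous_exp.comp (continuous_const.mul continuous_id)).intervalIntegrable _ _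

lemma fper_zero : fper 0 = 2 := by simp [fper]

lemma fper_one : fper 1 = 0 := by simp [fper]

lemma exp_le_poly {v : ℝ} (h0 : 0 ≤ v) (h1 : v ≤ 1) :
    Real.exp v ≤ 1 + v + v^2/2 + v^3/6 + 5/96 * v^4 := by
  have hb := Real.exp_bound (n := 4) (by rw [abs_of_nonneg h0]; exact h1) (by norm_num)
  have := abs_le.1 hb |>.2
  have hv4 : |v|^4 = v^4 := by rw [abs_of_nonneg h0]
  rw [hv4] at this
  simp [Finset.sum_range_succ, Nat.factorial] at this
  nlinarith [this]

lemma fper_le_two {v : ℝ} (h0 : 0 ≤ v) (h1 : v ≤ 1) :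
    fper v ≤ 2 ∧ (fper v = 2 ↔ v = 0) := by
  rcases eq_or_lt_of_le h0 with h|h
  · subst h; simp [fper_zero]
  · have hne : v ≠ 0 := ne_of_gt h
    have key : fper v < 2 := by
      have hmain : (1 - v) * (Real.exp (2*v) - 1) < 2 * v := by
        have hp : Real.exp v ≤ 1 + v + v^2/2 + v^3/6 + 5/96 * v^4 := exp_le_poly (le_of_lt h) h1
        have hE : Real.exp (2*v) = Real.exp v ^ 2 := by
          rw [← Real.exp_nat_mul]; norm_num [mul_comm]
        have hpos : (0:ℝ) < Real.exp v := Real.exp_pos v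
        have hsq : Real.exp v ^ 2 ≤ (1 + v + v^2/2 + v^3/6 + 5/96 * v^4)^2 :=
          pow_le_pow_left₀ (le_of_lt hpos) hp 2
        rw [hE]
        nlinarith [mul_nonneg (sub_nonneg.2 h1) (sub_nonneg.2 hsq), pow_pos h 3,
          pow_nonneg (le_of_lt h) 4, pow_nonneg (le_of_lt h) 5, pow_nonneg (le_of_lt h) 6,
          pow_nonneg (le_of_lt h) 7, pow_nonneg (le_of_lt h) 8, pow_nonneg (le_of_lt h) 9]
      rw [fper, integral_exp_mul v hne]
      rw [div_eq_inv_mul, ← mul_assoc, mul_comm (1-v) v⁻¹, mul_assoc]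
      rw [inv_mul_lt_iff₀ h] -- goal now (1-v)*(exp(2v)-1) < v * 2 ?
      linarith [hmain]
    refine ⟨le_of_lt key, ?_⟩
    constructor
    · intro hh; exact absurd hh (ne_of_lt key)
    · intro hh; exact absurd hh.symm (Ne.symm hne)

lemma fper_chain {v M : ℝ} (h0 : 0 ≤ v) (h1 : v ≤ 1) (hM : 2 ≤ M) :
    fper v + M * Real.exp (2*v) ≤ M * Real.exp 2 ∧
    (fper v + M * Real.exp (2*v) = M * Real.exp 2 ↔ v = 1) := by
  rcases eq_or_lt_of_le h1 with h|h
  · subst h; simp [fper]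
  · have hw : 0 < 1 - v := by linarith
    have hIle : (∫ s in (0:ℝ)..2, Real.exp (v * s)) ≤ 2 * Real.exp (2*v) := by
      have : (∫ s in (0:ℝ)..2, Real.exp (v * s)) ≤ ∫ _s in (0:ℝ)..2, Real.exp (2*v) := by
        apply intervalIntegral.integral_mono_on (by norm_num)
        · exact (Real.continuous_exp.comp (continuous_const.mul continuous_id)).intervalIntegrable _ _
        · exact intervalIntegrable_const
        · intro s hs
          exact Real.exp_le_exp.2 (by nlinarith [hs.1, hs.2])
      simpa using this
    have hfle : fper v ≤ 2 * (1 - v) * Real.exp (2*v) := by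
      rw [fper]
      calc (1-v) * ∫ s in (0:ℝ)..2, Real.exp (v*s) ≤ (1-v) * (2*Real.exp (2*v)) :=
            mul_le_mul_of_nonneg_left hIle (le_of_lt hw)
        _ = 2 * (1-v) * Real.exp (2*v) := by ring
    have hexp : 1 + 2*(1-v) < Real.exp (2*(1-v)) := by
      have := Real.add_one_lt_exp (x := 2*(1-v)) (by positivity)
      linarith
    have he2 : Real.exp 2 = Real.exp (2*v) * Real.exp (2*(1-v)) := by
      rw [← Real.exp_add]; ring_nf
    have hEpos : (0:ℝ) < Real.exp (2*v) := Real.exp_pos _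
    have key : fper v + M * Real.exp (2*v) < M * Real.exp 2 := by
      calc fper v + M * Real.exp (2*v) ≤ (2*(1-v) + M) * Real.exp (2*v) := by nlinarith
        _ < M * Real.exp (2*(1-v)) * Real.exp (2*v) := by
            have step : 2*(1-v) + M < M * Real.exp (2*(1-v)) := by nlinarith
            exact mul_lt_mul_of_pos_right step hEpos
        _ = M * Real.exp 2 := by rw [he2]; ring
    refine ⟨le_of_lt key, ?_⟩
    constructor
    · intro hh; exact absurd hh (ne_of_lt key)
    · intro hh; exact absurd hh.symm (ne_of_gt h)

lemma chain_step {a T M : ℝ} (h0 : 0 ≤ a) (h1 : a ≤ 1) (hM : 2 ≤ M) (hT : T ≤ M) :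
    fper a + Real.exp (2*a) * T ≤ M * Real.exp 2 ∧
    (fper a + Real.exp (2*a) * T = M * Real.exp 2 → a = 1 ∧ T = M) := by
  have hE : (0:ℝ) < Real.exp (2*a) := Real.exp_pos _
  have hXY : fper a + Real.exp (2*a) * T ≤ fper a + M * Real.exp (2*a) := by nlinarith
  have hYZ := fper_chain h0 h1 hM
  refine ⟨le_trans hXY hYZ.1, fun hh => ?_⟩
  have hY : fper a + M * Real.exp (2*a) = M * Real.exp 2 := le_antisymm hYZ.1 (by linarith)
  have hX : fper a + Real.exp (2*a) * T = fper a + M * Real.exp (2*a) := by linarith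
  refine ⟨hYZ.2.1 hY, ?_⟩
  have : Real.exp (2*a) * T = Real.exp (2*a) * M := by linarith
  exact mul_left_cancel₀ (ne_of_gt hE) this

/-! ### Computation of the consumption of a sampled control -/

variable (v : Fin 6 → ℝ)

open Fin.NatCast in
/-- The sampled values as a function on `ℕ`. -/
def wv (k : ℕ) : ℝ := v (k : Fin 6)

lemma usamp_eq {k : ℕ} {t : ℝ} (h1 : 2*k ≤ t) (h2 : t < 2*k+2) :
    uSampled2 v t = wv v k := by
  have : ⌊t/2⌋₊ = k := by
    have ht0 : (0:ℝ) ≤ t := le_trans (by positivity) h1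
    rw [Nat.floor_eq_iff (by positivity)]
    constructor
    · rw [le_div_iff₀ (by norm_num)]; linarith
    · rw [div_lt_iff₀ (by norm_num)]; push_cast; linarith
  simp [uSampled2, this, wv]

lemma usamp_ae (k : ℕ) :
    ∀ᵐ t ∂(volume : Measure ℝ), t ∈ Ι (2*k : ℝ) (2*k+2) → uSampled2 v t = wv v k := by
  have hsub : {t : ℝ | ¬ (t ∈ Ι (2*k : ℝ) (2*k+2) → uSampled2 v t = wv v k)} ⊆ {(2*k+2 : ℝ)} := by
    intro t ht
    simp only [mem_setOf_eq, Classical.not_imp] at ht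
    obtain ⟨htmem, hne⟩ := ht
    rw [uIoc_of_le (by linarith [Nat.cast_nonneg (α := ℝ) k] : (2*k:ℝ) ≤ 2*k+2)] at htmem
    rcases lt_or_eq_of_le htmem.2 with h|h
    · exact absurd (usamp_eq v (le_of_lt htmem.1) h) hne
    · exact h
  exact measure_mono_null hsub (measure_singleton _) |> ae_iff.2 |>.mono (fun _ h => h)

lemma usamp_intg_piece (k : ℕ) {t : ℝ} (h1 : 2*k ≤ t) (h2 : t ≤ 2*k+2) :
    IntervalIntegrable (uSampled2 v) volume (2*k) t ∧
    (∫ s in (2*k : ℝ)..t, uSampled2 v s) = wv v k * (t - 2*k) := by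
  have hae : ∀ᵐ s ∂(volume : Measure ℝ), s ∈ Ι (2*k : ℝ) t → uSampled2 v s = wv v k := by
    filter_upwards [usamp_ae v k] with s hs hmem
    apply hs
    rw [uIoc_of_le h1] at hmem
    rw [uIoc_of_le (by linarith)]
    exact ⟨hmem.1, le_trans hmem.2 h2⟩
  have hres : uSampled2 v =ᵐ[volume.restrict (Ι (2*k:ℝ) t)] fun _ => wv v k :=
    (ae_restrict_iff' measurableSet_uIoc).2 hae
  constructor
  · rw [intervalIntegrable_iff]
    exact (integrableOn_const measure_Ioc_lt_top.ne).congr hres.symm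
  · rw [intervalIntegral.integral_congr_ae ?_, intervalIntegral.integral_const, smul_eq_mul, mul_comm]
    filter_upwards [hae] with s hs hmem
    exact hs hmem

lemma usamp_intg_whole : ∀ k : ℕ, IntervalIntegrable (uSampled2 v) volume 0 (2*k) ∧
    (∫ s in (0:ℝ)..(2*k), uSampled2 v s) = ∑ j ∈ Finset.range k, 2 * wv v j := by
  intro k
  induction k with
  | zero => simp
  | succ n ih =>
    have hcast : ((2:ℝ)*(n+1:ℕ)) = 2*n + 2 := by push_cast; ring
    have hpc := usamp_intg_piece v (k := n) (t := 2*n+2) (by linarith) (le_refl _)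
    constructor
    · rw [hcast]
      exact ih.1.trans hpc.1
    · rw [hcast, ← intervalIntegral.integral_add_adjacent_intervals ih.1 hpc.1,
        ih.2, hpc.2, Finset.sum_range_succ]
      ring

lemma I_eq (k : ℕ) {t : ℝ} (h1 : 2*k ≤ t) (h2 : t ≤ 2*k+2) :
    (∫ s in (0:ℝ)..t, uSampled2 v s)
      = (∑ j ∈ Finset.range k, 2 * wv v j) + wv v k * (t - 2*k) := by
  have hpc := usamp_intg_piece v (k := k) h1 h2
  rw [← intervalIntegral.integral_add_adjacent_intervals (usamp_intg_whole v k).1 hpc.1,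
    (usamp_intg_whole v k).2, hpc.2]

/-- The partial "log-output" at time `2k`. -/
def Spart (k : ℕ) : ℝ := ∑ j ∈ Finset.range k, 2 * wv v j

lemma cons_piece (k : ℕ) :
    IntervalIntegrable (fun t => (1 - uSampled2 v t) * outputOf (uSampled2 v) t)
      volume (2*k) (2*k+2) ∧
    (∫ t in (2*k:ℝ)..(2*k+2), (1 - uSampled2 v t) * outputOf (uSampled2 v) t)
      = Real.exp (Spart v k) * fper (wv v k) := by
  set c := wv v k with hc
  set g : ℝ → ℝ := fun t => (1 - c) * Real.exp (Spart v k + c * (t - 2*k)) with hg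
  have hgcont : Continuous g := by
    apply continuous_const.mul
    exact Real.continuous_exp.comp (by continuity)
  have hae : ∀ᵐ t ∂(volume : Measure ℝ), t ∈ Ι (2*k:ℝ) (2*k+2) →
      (1 - uSampled2 v t) * outputOf (uSampled2 v) t = g t := by
    filter_upwards [usamp_ae v k] with t ht hmem
    have hmem' := hmem
    rw [uIoc_of_le (by linarith [Nat.cast_nonneg (α := ℝ) k])] at hmem'
    rw [ht hmem, hg, outputOf, I_eq v k (le_of_lt hmem'.1) hmem'.2]
    rfl
  have hres : (fun t => (1 - uSampled2 v t) * outputOf (uSampled2 v) t)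
      =ᵐ[volume.restrict (Ι (2*k:ℝ) (2*k+2))] g := (ae_restrict_iff' measurableSet_uIoc).2 hae
  have hgint : IntervalIntegrable g volume (2*k) (2*k+2) := hgcont.intervalIntegrable _ _
  constructor
  · rw [intervalIntegrable_iff] at hgint ⊢
    exact hgint.congr hres.symm
  · rw [intervalIntegral.integral_congr_ae hae]
    have : (∫ t in (2*k:ℝ)..(2*k+2), g t)
        = (1-c) * (Real.exp (Spart v k) * ∫ t in (2*k:ℝ)..(2*k+2), Real.exp (c * (t - 2*k))) := by
      rw [hg]
      rw [← intervalIntegral.integral_const_mul, ← intervalIntegral.integral_const_mul]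
      congr 1; funext t
      simp only [Real.exp_add]
      try ring
    rw [this]
    have hsub : (∫ t in (2*k:ℝ)..(2*k+2), Real.exp (c * (t - 2*k)))
        = ∫ s in (0:ℝ)..2, Real.exp (c * s) := by
      have := intervalIntegral.integral_comp_sub_right (a := (2*k:ℝ)) (b := 2*k+2)
        (fun s => Real.exp (c * s)) (2*k)
      simpa using this
    rw [hsub, fper]; ring

lemma cons_eq : consumption (uSampled2 v)
    = ∑ k ∈ Finset.range 6, Real.exp (Spart v k) * fper (wv v k) := by
  have key := intervalIntegral.sum_integral_adjacent_intervals (μ := volume)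
    (f := fun t => (1 - uSampled2 v t) * outputOf (uSampled2 v) t)
    (a := fun i : ℕ => (2*i : ℝ)) (n := 6) ?_
  · have h0 : ((2:ℝ) * (0:ℕ)) = 0 := by norm_num
    have h6 : ((2:ℝ) * (6:ℕ)) = 12 := by norm_num
    rw [h0, h6] at key
    rw [consumption, ← key]
    apply Finset.sum_congr rfl
    intro k hk
    have hcast : ((2:ℝ)*(k+1:ℕ)) = 2*k + 2 := by push_cast; ring
    rw [hcast, (cons_piece v k).2]
  · intro k _
    have hcast : ((2:ℝ)*(k+1:ℕ)) = 2*k + 2 := by push_cast; ring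
    simp only [hcast]
    exact (cons_piece v k).1

lemma cons_nested : consumption (uSampled2 v)
    = fper (v 0) + Real.exp (2*v 0) * (fper (v 1) + Real.exp (2*v 1) *
      (fper (v 2) + Real.exp (2*v 2) * (fper (v 3) + Real.exp (2*v 3) *
      (fper (v 4) + Real.exp (2*v 4) * fper (v 5))))) := by
  rw [cons_eq]
  have c0 : wv v 0 = v 0 := rfl
  have c1 : wv v 1 = v 1 := rfl
  have c2 : wv v 2 = v 2 := rfl
  have c3 : wv v 3 = v 3 := rfl
  have c4 : wv v 4 = v 4 := rfl
  have c5 : wv v 5 = v 5 := rfl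
  simp only [Finset.sum_range_succ, Finset.sum_range_zero, Spart, c0, c1, c2, c3, c4, c5,
    Real.exp_add, zero_add, Real.exp_zero]
  ring

/-- Optimal consumption with sampled-data control of sampling period 2
(continuous case `𝕋 = ℝ⁺`, `𝕋₁ = 2ℕ`): the optimal value is `2e¹⁰` and it is
attained exactly at `v = (1,1,1,1,1,0)`. -/
theorem optimal_consumption_sampling_period_two
    (v : Fin 6 → ℝ) (hv : ∀ i, v i ∈ Icc (0:ℝ) 1) :
    consumption (uSampled2 v) ≤ 2 * Real.exp 10 ∧
    (consumption (uSampled2 v) = 2 * Real.exp 10 ↔ v = ![1, 1, 1, 1, 1, 0]) := by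
  have hCeq := cons_nested v
  have e2 : (1:ℝ) ≤ Real.exp 2 := by
    have := Real.one_le_exp (by norm_num : (0:ℝ) ≤ 2); linarith
  have q2 : (1:ℝ) ≤ Real.exp 2 * Real.exp 2 := by nlinarith
  have q3 : (1:ℝ) ≤ Real.exp 2 * Real.exp 2 * Real.exp 2 := by nlinarith
  have q4 : (1:ℝ) ≤ Real.exp 2 * Real.exp 2 * Real.exp 2 * Real.exp 2 := by nlinarith
  have hfin : 2 * Real.exp 2 * Real.exp 2 * Real.exp 2 * Real.exp 2 * Real.exp 2
      = 2 * Real.exp 10 := by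
    rw [show (10:ℝ) = 2+2+2+2+2 by norm_num, Real.exp_add, Real.exp_add, Real.exp_add,
      Real.exp_add]
    ring
  have h5 := fper_le_two (hv 5).1 (hv 5).2
  have s4 := chain_step (hv 4).1 (hv 4).2 (le_refl 2) h5.1
  have s3 := chain_step (hv 3).1 (hv 3).2 (by linarith : (2:ℝ) ≤ 2 * Real.exp 2) s4.1
  have s2 := chain_step (hv 2).1 (hv 2).2
    (by linarith : (2:ℝ) ≤ 2 * Real.exp 2 * Real.exp 2) s3.1
  have s1 := chain_step (hv 1).1 (hv 1).2
    (by linarith : (2:ℝ) ≤ 2 * Real.exp 2 * Real.exp 2 * Real.exp 2) s2.1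
  have s0 := chain_step (hv 0).1 (hv 0).2
    (by linarith : (2:ℝ) ≤ 2 * Real.exp 2 * Real.exp 2 * Real.exp 2 * Real.exp 2) s1.1
  constructor
  · rw [hCeq]
    calc _ ≤ 2 * Real.exp 2 * Real.exp 2 * Real.exp 2 * Real.exp 2 * Real.exp 2 := s0.1
      _ = 2 * Real.exp 10 := hfin
  constructor
  · intro hh
    rw [hCeq] at hh
    rw [← hfin] at hh
    obtain ⟨h0, r0⟩ := s0.2 hh
    obtain ⟨h1, r1⟩ := s1.2 r0
    obtain ⟨h2, r2⟩ := s2.2 r1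
    obtain ⟨h3, r3⟩ := s3.2 r2
    obtain ⟨h4, r4⟩ := s4.2 r3
    have h5' : v 5 = 0 := h5.2.1 r4
    have hvv : v = ![v 0, v 1, v 2, v 3, v 4, v 5] := by
      funext i; fin_cases i <;> rfl
    rw [hvv, h0, h1, h2, h3, h4, h5']
  · intro hh
    subst hh
    rw [hCeq]
    have e0 : (![1,1,1,1,1,0] : Fin 6 → ℝ) 0 = 1 := rfl
    have e1 : (![1,1,1,1,1,0] : Fin 6 → ℝ) 1 = 1 := rfl
    have e2' : (![1,1,1,1,1,0] : Fin 6 → ℝ) 2 = 1 := rfl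
    have e3 : (![1,1,1,1,1,0] : Fin 6 → ℝ) 3 = 1 := rfl
    have e4 : (![1,1,1,1,1,0] : Fin 6 → ℝ) 4 = 1 := rfl
    have e5 : (![1,1,1,1,1,0] : Fin 6 → ℝ) 5 = 0 := rfl
    rw [e0, e1, e2', e3, e4, e5, fper_one, fper_zero, ← hfin]
    norm_num
    ring

end
end

section
/- Optimal consumption with sampled-data control of sampling period 1 (continuous case 𝕋 = ℝ⁺, 𝕋₁ = ℕ): For every v = (v₀, …, v₁₁) ∈ [0,1]^{12}, letting u_v : [0,12] → [0,1] be defined by u_v(t) = v_{⌊t⌋}, one has C(u_v) ≤ e^{11}, with equality for v = (1,1,1,1,1,1,1,1,1,1,1,0). -/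
open MeasureTheory Set

noncomputable section

/-- The sampled-data control of sampling period 1 associated with `v ∈ [0,1]¹²`:
`u_v(t) = v_{⌊t⌋}`. -/
def uSampled1 (v : Fin 12 → ℝ) : ℝ → ℝ := fun t => v (Fin.ofNat 12 (⌊t⌋₊ : ℕ))

open Fin.NatCast
open scoped Interval

namespace OptSamp

def S (v : Fin 12 → ℝ) (k : ℕ) : ℝ := ∑ j ∈ Finset.range k, v (j : Fin 12)

def F (a : ℝ) : ℝ := ∫ s in (0:ℝ)..1, (1 - a) * Real.exp (a * s)

variable {v : Fin 12 → ℝ}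

lemma u_eq (k : ℕ) {t : ℝ} (ht : t ∈ Ico (k:ℝ) (k+1)) :
    uSampled1 v t = v (k : Fin 12) := by
  have h0 : (0:ℝ) ≤ t := le_trans (by positivity) ht.1
  have : ⌊t⌋₊ = k := by
    rw [Nat.floor_eq_iff h0]
    exact ⟨ht.1, ht.2⟩
  simp [uSampled1, this]

lemma measurable_u : Measurable (uSampled1 v) :=
  (measurable_from_top (f := fun n : ℕ => v (n : Fin 12))).comp Nat.measurable_floor

lemma u_bound (hv : ∀ i, v i ∈ Icc (0:ℝ) 1) (t : ℝ) : |uSampled1 v t| ≤ 1 := by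
  have := hv (Fin.ofNat 12 (⌊t⌋₊ : ℕ))
  simp only [uSampled1]
  rw [abs_le]
  exact ⟨by linarith [this.1], this.2⟩

lemma intvInt_u (hv : ∀ i, v i ∈ Icc (0:ℝ) 1) (a b : ℝ) :
    IntervalIntegrable (uSampled1 v) volume a b := by
  rw [intervalIntegrable_iff]
  refine Integrable.mono' (g := fun _ => 1) ?_ (measurable_u.aestronglyMeasurable) ?_
  · exact (integrableOn_const_iff enorm_ne_top).2 (Or.inr measure_Ioc_lt_top)
  · exact Filter.Eventually.of_forall fun t => u_bound hv t

lemma ae_ne (c : ℝ) : ∀ᵐ t : ℝ, t ≠ c := by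
  rw [ae_iff]
  simp only [ne_eq, not_not, setOf_eq_eq_singleton]
  exact measure_singleton c

lemma integral_u_unit (hv : ∀ i, v i ∈ Icc (0:ℝ) 1) (k : ℕ) :
    ∫ t in (k:ℝ)..(k+1), uSampled1 v t = v (k : Fin 12) := by
  have hae : ∀ᵐ t : ℝ, t ∈ Ι (k:ℝ) (k+1) → uSampled1 v t = v (k : Fin 12) := by
    filter_upwards [ae_ne ((k:ℝ)+1)] with t hne hmem
    rw [uIoc_of_le (by linarith : (k:ℝ) ≤ (k:ℝ)+1)] at hmem
    exact u_eq k ⟨hmem.1.le, lt_of_le_of_ne hmem.2 hne⟩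
  rw [intervalIntegral.integral_congr_ae hae]
  simp

lemma integral_u_nat (hv : ∀ i, v i ∈ Icc (0:ℝ) 1) (k : ℕ) :
    ∫ t in (0:ℝ)..(k:ℝ), uSampled1 v t = S v k := by
  induction k with
  | zero => simp [S]
  | succ n ih =>
      have h1 : (↑(n+1) : ℝ) = (n:ℝ) + 1 := by push_cast; ring
      rw [h1, ← intervalIntegral.integral_add_adjacent_intervals
        (intvInt_u hv 0 n) (intvInt_u hv n (n+1)), ih, integral_u_unit hv n]
      simp [S, Finset.sum_range_succ]

lemma integral_u (hv : ∀ i, v i ∈ Icc (0:ℝ) 1) (k : ℕ) {t : ℝ}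
    (ht : t ∈ Icc (k:ℝ) (k+1)) :
    ∫ s in (0:ℝ)..t, uSampled1 v s = S v k + v (k : Fin 12) * (t - k) := by
  rw [← intervalIntegral.integral_add_adjacent_intervals (intvInt_u hv 0 k) (intvInt_u hv k t),
    integral_u_nat hv k]
  congr 1
  have hae : ∀ᵐ s : ℝ, s ∈ Ι (k:ℝ) t → uSampled1 v s = v (k : Fin 12) := by
    filter_upwards [ae_ne ((k:ℝ)+1)] with s hne hmem
    rw [uIoc_of_le ht.1] at hmem
    have hlt : s < (k:ℝ)+1 := lt_of_le_of_ne (hmem.2.trans ht.2) hne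
    exact u_eq k ⟨hmem.1.le, hlt⟩
  rw [intervalIntegral.integral_congr_ae hae]
  simp [mul_comm]

lemma piece (hv : ∀ i, v i ∈ Icc (0:ℝ) 1) (k : ℕ) :
    ∫ t in (k:ℝ)..(k+1), (1 - uSampled1 v t) * outputOf (uSampled1 v) t
      = Real.exp (S v k) * F (v (k : Fin 12)) := by
  have hae : ∀ᵐ t : ℝ, t ∈ Ι (k:ℝ) (k+1) →
      (1 - uSampled1 v t) * outputOf (uSampled1 v) t
        = Real.exp (S v k) * ((1 - v (k : Fin 12)) * Real.exp (v (k : Fin 12) * (t - k))) := by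
    filter_upwards [ae_ne ((k:ℝ)+1)] with t hne hmem
    rw [uIoc_of_le (by linarith : (k:ℝ) ≤ (k:ℝ)+1)] at hmem
    have htIco : t ∈ Ico (k:ℝ) ((k:ℝ)+1) := ⟨hmem.1.le, lt_of_le_of_ne hmem.2 hne⟩
    rw [u_eq k htIco, outputOf, integral_u hv k ⟨htIco.1, htIco.2.le⟩, Real.exp_add]
    ring
  rw [intervalIntegral.integral_congr_ae hae, intervalIntegral.integral_const_mul]
  congr 1
  have hcomp := intervalIntegral.integral_comp_sub_right
    (a := (k:ℝ)) (b := (k:ℝ)+1)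
    (fun s => (1 - v (k : Fin 12)) * Real.exp (v (k : Fin 12) * s)) (k:ℝ)
  simp only [sub_self, add_sub_cancel_left] at hcomp
  rw [hcomp, F]

lemma intvInt_h (hv : ∀ i, v i ∈ Icc (0:ℝ) 1) (k : ℕ) (hk : k < 12) :
    IntervalIntegrable (fun t => (1 - uSampled1 v t) * outputOf (uSampled1 v) t)
      volume (k:ℝ) ((k:ℝ)+1) := by
  rw [intervalIntegrable_iff, uIoc_of_le (by linarith : (k:ℝ) ≤ (k:ℝ)+1)]
  refine Integrable.mono' (g := fun _ => 2 * Real.exp 12)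
    ((integrableOn_const_iff enorm_ne_top).2 (Or.inr measure_Ioc_lt_top)) ?_ ?_
  · exact ((measurable_const.sub measurable_u).mul
      ((Real.continuous_exp.comp
        (intervalIntegral.continuous_primitive (intvInt_u hv) 0)).measurable)).aestronglyMeasurable
  · rw [ae_restrict_iff' measurableSet_Ioc]
    refine Filter.Eventually.of_forall fun t ht => ?_
    have h1 : |1 - uSampled1 v t| ≤ 2 := by
      have := u_bound hv t
      rw [abs_le] at this ⊢
      constructor <;> linarith [this.1, this.2]
    have h2 : ‖∫ s in (0:ℝ)..t, uSampled1 v s‖ ≤ 1 * |t - 0| :=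
      intervalIntegral.norm_integral_le_of_norm_le_const fun x _ => by
        simpa using u_bound hv x
    have ht12 : |t - 0| ≤ 12 := by
      rw [abs_le]
      have hk' : (k:ℝ) ≤ 11 := by exact_mod_cast Nat.lt_succ_iff.mp hk
      constructor <;> [linarith [ht.1, (by positivity : (0:ℝ) ≤ (k:ℝ))]; linarith [ht.2] ]
    have h3 : outputOf (uSampled1 v) t ≤ Real.exp 12 := by
      rw [outputOf]
      apply Real.exp_le_exp.2
      calc (∫ s in (0:ℝ)..t, uSampled1 v s) ≤ ‖∫ s in (0:ℝ)..t, uSampled1 v s‖ := le_abs_self _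
        _ ≤ 12 := by linarith
    have h4 : 0 < outputOf (uSampled1 v) t := Real.exp_pos _
    rw [norm_mul]
    have : ‖outputOf (uSampled1 v) t‖ ≤ Real.exp 12 := by
      rwa [Real.norm_eq_abs, abs_of_pos h4]
    calc ‖1 - uSampled1 v t‖ * ‖outputOf (uSampled1 v) t‖
        ≤ 2 * Real.exp 12 := by
          apply mul_le_mul h1 this (norm_nonneg _) (by norm_num)

lemma consumption_eq (hv : ∀ i, v i ∈ Icc (0:ℝ) 1) :
    consumption (uSampled1 v)
      = ∑ k ∈ Finset.range 12, Real.exp (S v k) * F (v (k : Fin 12)) := by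
  have hsum := intervalIntegral.sum_integral_adjacent_intervals (μ := volume)
    (a := fun k : ℕ => (k:ℝ)) (n := 12)
    (f := fun t => (1 - uSampled1 v t) * outputOf (uSampled1 v) t)
    (fun k hk => by push_cast; exact intvInt_h hv k hk)
  norm_num at hsum
  rw [consumption, ← hsum]
  refine Finset.sum_congr rfl fun k hk => ?_
  rw [← piece hv k]

/- Properties of F -/

lemma integral_aexp (a : ℝ) :
    ∫ s in (0:ℝ)..1, a * Real.exp (a * s) = Real.exp a - 1 := by
  have h : ∀ x ∈ uIcc (0:ℝ) 1, HasDerivAt (fun s => Real.exp (a * s)) (a * Real.exp (a * x)) x := by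
    intro x _
    have h1 : HasDerivAt (fun s : ℝ => a * s) a x := by
      simpa using (hasDerivAt_id x).const_mul a
    have := (Real.hasDerivAt_exp (a * x)).comp x h1
    simpa [mul_comm, Function.comp_def] using this
  have := intervalIntegral.integral_eq_sub_of_hasDerivAt h
    (Continuous.intervalIntegrable (by fun_prop) 0 1)
  simpa using this

lemma F_eq (a : ℝ) :
    F a = (∫ s in (0:ℝ)..1, Real.exp (a * s)) - (Real.exp a - 1) := by
  rw [← integral_aexp a, F,
    ← intervalIntegral.integral_sub (Continuous.intervalIntegrable (by fun_prop) 0 1)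
      (Continuous.intervalIntegrable (by fun_prop) 0 1)]
  congr 1
  funext s
  ring

lemma F_le {a : ℝ} (ha : a ∈ Icc (0:ℝ) 1) : F a ≤ Real.exp 1 - Real.exp a := by
  have hG : (∫ s in (0:ℝ)..1, Real.exp (a * s)) ≤ Real.exp 1 - 1 := by
    have : (∫ s in (0:ℝ)..1, Real.exp (a * s)) ≤ ∫ s in (0:ℝ)..1, Real.exp s := by
      apply intervalIntegral.integral_mono_on (by norm_num)
        (Continuous.intervalIntegrable (by fun_prop) 0 1)
        (Continuous.intervalIntegrable (by fun_prop) 0 1)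
      intro x hx
      apply Real.exp_le_exp.2
      nlinarith [hx.1, hx.2, ha.1, ha.2]
    rwa [integral_exp, Real.exp_zero] at this
  rw [F_eq]
  linarith

lemma F_le_one {a : ℝ} (ha : a ∈ Icc (0:ℝ) 1) : F a ≤ 1 := by
  have hG : (∫ s in (0:ℝ)..1, Real.exp (a * s)) ≤ Real.exp a := by
    have : (∫ s in (0:ℝ)..1, Real.exp (a * s)) ≤ ∫ s in (0:ℝ)..1, Real.exp a := by
      apply intervalIntegral.integral_mono_on (by norm_num)
        (Continuous.intervalIntegrable (by fun_prop) 0 1)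
        (Continuous.intervalIntegrable (by fun_prop) 0 1)
      intro x hx
      apply Real.exp_le_exp.2
      nlinarith [hx.1, hx.2, ha.1, ha.2]
    simpa using this
  rw [F_eq]
  linarith

lemma F_one : F 1 = 0 := by simp [F]

lemma F_zero : F 0 = 1 := by simp [F]

/- The dynamic-programming bound -/

lemma tail_bound (hv : ∀ i, v i ∈ Icc (0:ℝ) 1) :
    ∀ d : ℕ, d ≤ 11 →
      ∑ k ∈ Finset.Ico (11 - d) 12, Real.exp (S v k) * F (v (k : Fin 12))
        ≤ Real.exp (d : ℝ) * Real.exp (S v (11 - d)) := by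
  intro d
  induction d with
  | zero =>
      intro _
      have hIco : Finset.Ico (11 - 0) 12 = {11} := rfl
      rw [hIco, Finset.sum_singleton]
      simp only [Nat.sub_zero, Nat.cast_zero, Real.exp_zero, one_mul]
      have h1 := F_le_one (hv ((11:ℕ) : Fin 12))
      nlinarith [Real.exp_pos (S v 11)]
  | succ d ih =>
      intro hd
      have hd' : d ≤ 11 := Nat.le_of_succ_le hd
      set m := 11 - (d + 1) with hm
      have hm1 : m + 1 = 11 - d := by omega
      have hmlt : m < 12 := by omega
      rw [Finset.sum_eq_sum_Ico_succ_bot (by omega : m < 12)]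
      have htail := ih hd'
      rw [← hm1] at htail
      have hS : S v (m + 1) = S v m + v (m : Fin 12) := by
        rw [S, Finset.sum_range_succ]; rfl
      rw [hS, Real.exp_add] at htail
      have hkey : Real.exp (S v m) * F (v (m : Fin 12))
          + Real.exp (d:ℝ) * (Real.exp (S v m) * Real.exp (v (m : Fin 12)))
          ≤ Real.exp ((d:ℝ) + 1) * Real.exp (S v m) := by
        have hF := F_le (hv ((m:ℕ) : Fin 12))
        have hE : (1:ℝ) ≤ Real.exp (d:ℝ) := Real.one_le_exp (by positivity)
        have hea : Real.exp (v ((m:ℕ) : Fin 12)) ≤ Real.exp 1 :=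
          Real.exp_le_exp.2 (hv _).2
        have hpos : (0:ℝ) < Real.exp (S v m) := Real.exp_pos _
        rw [Real.exp_add]
        nlinarith [mul_le_mul_of_nonneg_left hF hpos.le,
          mul_nonneg (mul_nonneg (sub_nonneg.2 hE) (sub_nonneg.2 hea)) hpos.le]
      calc Real.exp (S v m) * F (v (m : Fin 12))
            + ∑ k ∈ Finset.Ico (m+1) 12, Real.exp (S v k) * F (v (k : Fin 12))
          ≤ Real.exp (S v m) * F (v (m : Fin 12))
            + Real.exp (d:ℝ) * (Real.exp (S v m) * Real.exp (v (m : Fin 12))) := by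
            linarith
        _ ≤ Real.exp ((d:ℝ) + 1) * Real.exp (S v m) := hkey
        _ = Real.exp ((d+1 : ℕ):ℝ) * Real.exp (S v m) := by push_cast; ring_nf

lemma main_bound (hv : ∀ i, v i ∈ Icc (0:ℝ) 1) :
    consumption (uSampled1 v) ≤ Real.exp 11 := by
  rw [consumption_eq hv, Finset.range_eq_Ico]
  have := tail_bound hv 11 (le_refl 11)
  simp only [Nat.sub_self] at this
  calc ∑ k ∈ Finset.Ico 0 12, Real.exp (S v k) * F (v (k : Fin 12))
      ≤ Real.exp ((11:ℕ):ℝ) * Real.exp (S v 0) := this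
    _ = Real.exp 11 := by norm_num [S]

end OptSamp

/-- Optimal consumption with sampled-data control of sampling period 1
(continuous case `𝕋 = ℝ⁺`, `𝕋₁ = ℕ`): the optimal value is `e¹¹`, attained at
`v = (1,1,1,1,1,1,1,1,1,1,1,0)`. -/
theorem optimal_consumption_sampling_period_one :
    (∀ v : Fin 12 → ℝ, (∀ i, v i ∈ Icc (0:ℝ) 1) →
      consumption (uSampled1 v) ≤ Real.exp 11) ∧
    consumption (uSampled1 ![1, 1, 1, 1, 1, 1, 1, 1, 1, 1, 1, 0]) = Real.exp 11 := by
  constructor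
  · exact fun v hv => OptSamp.main_bound hv
  · have hv : ∀ i, (![1, 1, 1, 1, 1, 1, 1, 1, 1, 1, 1, 0] : Fin 12 → ℝ) i ∈ Icc (0:ℝ) 1 := by
      intro i; fin_cases i <;> norm_num
    rw [OptSamp.consumption_eq hv]
    have e0 : (![1, 1, 1, 1, 1, 1, 1, 1, 1, 1, 1, 0] : Fin 12 → ℝ) ((0:ℕ):Fin 12) = 1 := rfl
    have e1 : (![1, 1, 1, 1, 1, 1, 1, 1, 1, 1, 1, 0] : Fin 12 → ℝ) ((1:ℕ):Fin 12) = 1 := rfl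
    have e2 : (![1, 1, 1, 1, 1, 1, 1, 1, 1, 1, 1, 0] : Fin 12 → ℝ) ((2:ℕ):Fin 12) = 1 := rfl
    have e3 : (![1, 1, 1, 1, 1, 1, 1, 1, 1, 1, 1, 0] : Fin 12 → ℝ) ((3:ℕ):Fin 12) = 1 := rfl
    have e4 : (![1, 1, 1, 1, 1, 1, 1, 1, 1, 1, 1, 0] : Fin 12 → ℝ) ((4:ℕ):Fin 12) = 1 := rfl
    have e5 : (![1, 1, 1, 1, 1, 1, 1, 1, 1, 1, 1, 0] : Fin 12 → ℝ) ((5:ℕ):Fin 12) = 1 := rfl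
    have e6 : (![1, 1, 1, 1, 1, 1, 1, 1, 1, 1, 1, 0] : Fin 12 → ℝ) ((6:ℕ):Fin 12) = 1 := rfl
    have e7 : (![1, 1, 1, 1, 1, 1, 1, 1, 1, 1, 1, 0] : Fin 12 → ℝ) ((7:ℕ):Fin 12) = 1 := rfl
    have e8 : (![1, 1, 1, 1, 1, 1, 1, 1, 1, 1, 1, 0] : Fin 12 → ℝ) ((8:ℕ):Fin 12) = 1 := rfl
    have e9 : (![1, 1, 1, 1, 1, 1, 1, 1, 1, 1, 1, 0] : Fin 12 → ℝ) ((9:ℕ):Fin 12) = 1 := rfl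
    have e10 : (![1, 1, 1, 1, 1, 1, 1, 1, 1, 1, 1, 0] : Fin 12 → ℝ) ((10:ℕ):Fin 12) = 1 := rfl
    have e11 : (![1, 1, 1, 1, 1, 1, 1, 1, 1, 1, 1, 0] : Fin 12 → ℝ) ((11:ℕ):Fin 12) = 0 := rfl
    simp only [OptSamp.S, Finset.sum_range_succ, Finset.sum_range_zero,
      e0, e1, e2, e3, e4, e5, e6, e7, e8, e9, e10, e11, OptSamp.F_one, OptSamp.F_zero]
    norm_num

end
end

section
/- Optimal consumption in the discrete permanent case (𝕋 = 𝕋₁ = ℕ): For every u = (u₀, …, u₁₁) ∈ [0,1]^{12}, C(u) ≤ 2^{11} = 2048; moreover, for every s ∈ [0,1], the control u given by u_k = 1 for 0 ≤ k ≤ 9, u_{10} = s and u_{11} = 0 satisfies C(u) = 2^{11}. In particular, the discrete optimal control is not unique. -/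
open Set

noncomputable section

/-- The discrete output: `q₀(u) = 1` and `q_{k+1}(u) = (1 + u_k) q_k(u)`,
i.e. `q_k(u) = ∏_{j<k} (1 + u_j)`. -/
def outputD (u : ℕ → ℝ) (k : ℕ) : ℝ := ∏ j ∈ Finset.range k, (1 + u j)

/-- The discrete consumption `C(u) = Σ_{k=0}^{11} (1 − u_k) q_k(u)`. -/
def consumptionD (u : ℕ → ℝ) : ℝ := ∑ k ∈ Finset.range 12, (1 - u k) * outputD u k

lemma auxC (n : ℕ) : ∀ u : ℕ → ℝ, (∀ k < n+1, u k ∈ Icc (0:ℝ) 1) →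
    ∑ k ∈ Finset.range (n+1), (1 - u k) * outputD u k ≤ 2^n := by
  induction n with
  | zero =>
    intro u h
    have h0 := h 0 (by norm_num)
    simp [outputD]
    linarith [h0.1]
  | succ n ih =>
    intro u h
    have hterm : ∀ k, (1 - u (k+1)) * outputD u (k+1)
        = (1 + u 0) * ((1 - u (k+1)) * outputD (fun j => u (j+1)) k) := by
      intro k
      simp [outputD, Finset.prod_range_succ']
      ring
    have key : ∑ k ∈ Finset.range (n+2), (1 - u k) * outputD u k
        = (1 - u 0) + (1 + u 0) * ∑ k ∈ Finset.range (n+1),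
            (1 - u (k+1)) * outputD (fun j => u (j+1)) k := by
      rw [Finset.sum_range_succ' (fun k => (1 - u k) * outputD u k) (n+1)]
      rw [Finset.sum_congr rfl (fun k _ => hterm k), ← Finset.mul_sum]
      simp [outputD]
      ring
    have hS := ih (fun j => u (j+1)) (fun k hk => h (k+1) (by omega))
    have h0 := h 0 (by omega)
    have h1 : (1:ℝ) ≤ 2^n := one_le_pow₀ (by norm_num)
    have h2 : (1 + u 0) * (∑ k ∈ Finset.range (n+1),
        (1 - u (k+1)) * outputD (fun j => u (j+1)) k) ≤ (1 + u 0) * 2^n :=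
      mul_le_mul_of_nonneg_left hS (by linarith [h0.1])
    rw [key]
    have := h0.1; have := h0.2
    calc (1 - u 0) + (1 + u 0) * ∑ k ∈ Finset.range (n+1),
            (1 - u (k+1)) * outputD (fun j => u (j+1)) k
        ≤ (1 - u 0) + (1 + u 0) * 2^n := by linarith
      _ ≤ 2^(n+1) := by
          rw [pow_succ]
          nlinarith [mul_nonneg (sub_nonneg.2 h0.2) (sub_nonneg.2 h1)]

/-- Optimal consumption in the discrete permanent case (`𝕋 = 𝕋₁ = ℕ`):
the optimal value is `2¹¹ = 2048`, attained by a one-parameter family of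
controls; in particular the discrete optimal control is not unique. -/
theorem optimal_consumption_discrete_permanent :
    (∀ u : ℕ → ℝ, (∀ k < 12, u k ∈ Icc (0:ℝ) 1) → consumptionD u ≤ 2048) ∧
    (∀ s ∈ Icc (0:ℝ) 1,
      consumptionD (fun k => if k ≤ 9 then 1 else if k = 10 then s else 0) = 2048) ∧
    (∃ u u' : ℕ → ℝ,
      (∀ k < 12, u k ∈ Icc (0:ℝ) 1) ∧ (∀ k < 12, u' k ∈ Icc (0:ℝ) 1) ∧
      consumptionD u = 2048 ∧ consumptionD u' = 2048 ∧ ∃ k < 12, u k ≠ u' k) := by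
  have hval : ∀ s ∈ Icc (0:ℝ) 1,
      consumptionD (fun k => if k ≤ 9 then 1 else if k = 10 then s else 0) = 2048 := by
    intro s _
    simp [consumptionD, outputD, Finset.sum_range_succ, Finset.prod_range_succ]
    ring
  refine ⟨?_, hval, ?_⟩
  · intro u hu
    have h := auxC 11 u (by intro k hk; exact hu k (by omega))
    have h' : consumptionD u ≤ 2^11 := h
    norm_num at h'
    exact h'
  · refine ⟨(fun k => if k ≤ 9 then 1 else if k = 10 then (0:ℝ) else 0),
      (fun k => if k ≤ 9 then 1 else if k = 10 then (1:ℝ) else 0), ?_, ?_,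
      hval 0 (by norm_num), hval 1 (by norm_num), 10, by norm_num, by norm_num⟩
    · intro k _; by_cases h : k ≤ 9 <;> by_cases h' : k = 10 <;> simp [h, h']
    · intro k _; by_cases h : k ≤ 9 <;> by_cases h' : k = 10 <;> simp [h, h']

end
end

section
/- Optimal consumption in the discrete case with sampling period 3 (𝕋 = ℕ, 𝕋₁ = 3ℕ): For every v = (v₀, v₁, v₂, v₃) ∈ [0,1]⁴, letting u ∈ [0,1]^{12} be given by u_k = v_{⌊k/3⌋}, one has C(u) ≤ 3·2⁹ = 1536, with equality for v = (1,1,1,0). -/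
open Set

noncomputable section

set_option maxHeartbeats 1000000 in
lemma key (a b c d : ℝ) (ha : a ∈ Icc (0:ℝ) 1) (hb : b ∈ Icc (0:ℝ) 1)
    (hc : c ∈ Icc (0:ℝ) 1) (hd : d ∈ Icc (0:ℝ) 1) :
    (1-a)*(3+3*a+a^2) + (1+a)^3 * ((1-b)*(3+3*b+b^2) + (1+b)^3 *
      ((1-c)*(3+3*c+c^2) + (1+c)^3 * ((1-d)*(3+3*d+d^2)))) ≤ 1536 := by
  obtain ⟨ha0, ha1⟩ := ha
  obtain ⟨hb0, hb1⟩ := hb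
  obtain ⟨hc0, hc1⟩ := hc
  obtain ⟨hd0, hd1⟩ := hd
  have hcpos : (0:ℝ) ≤ (1+c)^3 := by positivity
  have hbpos : (0:ℝ) ≤ (1+b)^3 := by positivity
  have hapos : (0:ℝ) ≤ (1+a)^3 := by positivity
  have hd3 : (1-d)*(3+3*d+d^2) ≤ 3 := by nlinarith [sq_nonneg d, mul_nonneg (mul_nonneg hd0 hd0) hd0]
  have hfc : (0:ℝ) ≤ (1-c)*(18+9*c+2*c^2) := by
    apply mul_nonneg (by linarith); nlinarith [sq_nonneg c]
  have hc24 : (1-c)*(3+3*c+c^2) + (1+c)^3 * ((1-d)*(3+3*d+d^2)) ≤ 24 := by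
    have h := mul_le_mul_of_nonneg_left hd3 hcpos
    linarith [h, hfc]
  have hfb : (0:ℝ) ≤ (1-b)*(165+93*b+23*b^2) := by
    apply mul_nonneg (by linarith); nlinarith [sq_nonneg b]
  have hb192 : (1-b)*(3+3*b+b^2) + (1+b)^3 *
      ((1-c)*(3+3*c+c^2) + (1+c)^3 * ((1-d)*(3+3*d+d^2))) ≤ 192 := by
    have h := mul_le_mul_of_nonneg_left hc24 hbpos
    linarith [h, hfb]
  have hfa : (0:ℝ) ≤ (1-a)*(1341+765*a+191*a^2) := by
    apply mul_nonneg (by linarith); nlinarith [sq_nonneg a]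
  have h := mul_le_mul_of_nonneg_left hb192 hapos
  linarith [h, hfa]

/-- Optimal consumption in the discrete case with sampling period 3
(`𝕋 = ℕ`, `𝕋₁ = 3ℕ`): over controls of the form `u_k = v_{⌊k/3⌋}` with
`v ∈ [0,1]⁴`, the optimal value is `3·2⁹ = 1536`, attained at `v = (1,1,1,0)`. -/
theorem optimal_consumption_discrete_period_three :
    (∀ v : ℕ → ℝ, (∀ k < 4, v k ∈ Icc (0:ℝ) 1) →
      consumptionD (fun k => v (k / 3)) ≤ 1536) ∧
    consumptionD (fun k => if k / 3 ≤ 2 then (1:ℝ) else 0) = 1536 := by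
  constructor
  · intro v hv
    have h := key (v 0) (v 1) (v 2) (v 3) (hv 0 (by norm_num)) (hv 1 (by norm_num))
      (hv 2 (by norm_num)) (hv 3 (by norm_num))
    have heq : consumptionD (fun k => v (k / 3)) =
        (1-v 0)*(3+3*v 0+(v 0)^2) + (1+v 0)^3 * ((1-v 1)*(3+3*v 1+(v 1)^2) + (1+v 1)^3 *
          ((1-v 2)*(3+3*v 2+(v 2)^2) + (1+v 2)^3 * ((1-v 3)*(3+3*v 3+(v 3)^2)))) := by
      simp only [consumptionD, outputD, Finset.sum_range_succ, Finset.prod_range_succ,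
        Finset.sum_range_zero, Finset.prod_range_zero]
      norm_num
      ring
    rw [heq]; exact h
  · simp only [consumptionD, outputD, Finset.sum_range_succ, Finset.prod_range_succ,
      Finset.sum_range_zero, Finset.prod_range_zero]
    norm_num

end
end
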